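/- arXiv:1009.2803 — 12 statements merged into one kernel-verified Lean document; each statement's English description precedes it below -/
import Mathlib

section
/- For a Boolean algebra A with Stone space X, the image of the map a ↦ â = {μ : a ∈ μ} is join-of-meet dense and meet-of-join dense in P(X): every subset of X is both an intersection of unions and a union of intersections of sets of the form â. -/
def IsUltrafilterBA {A : Type*} [BooleanAlgebra A] (μ : Set A) : Prop :=
  (⊤ ∈ μ) ∧ (⊥ ∉ μ) ∧
  (∀ a b : A, a ∈ μ → a ≤ b → b ∈ μ) ∧
  (∀ a b : A, a ∈ μ → b ∈ μ → a ⊓ b ∈ μ) ∧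
  (∀ a : A, a ∈ μ ∨ aᶜ ∈ μ)

def stoneHat {A : Type*} [BooleanAlgebra A] (a : A) :
    Set {μ : Set A // IsUltrafilterBA μ} := {μ | a ∈ μ.1}

lemma uf_not_both {A : Type*} [BooleanAlgebra A] {μ : Set A} (h : IsUltrafilterBA μ)
    {a : A} (h1 : a ∈ μ) (h2 : aᶜ ∈ μ) : False := by
  have : a ⊓ aᶜ ∈ μ := h.2.2.2.1 a aᶜ h1 h2
  rw [inf_compl_eq_bot] at this
  exact h.2.1 this

lemma uf_sub_eq {A : Type*} [BooleanAlgebra A] {μ ν : {μ : Set A // IsUltrafilterBA μ}}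
    (h : μ.1 ⊆ ν.1) : μ = ν := by
  apply Subtype.ext
  apply Set.Subset.antisymm h
  intro a ha
  rcases μ.2.2.2.2.2 a with h1 | h1
  · exact h1
  · exact absurd (ν.2.2.2.2.1 a aᶜ ha (h h1)) (by
      rw [inf_compl_eq_bot]; exact ν.2.2.1)

lemma key_singleton {A : Type*} [BooleanAlgebra A] (μ : {μ : Set A // IsUltrafilterBA μ}) :
    (⋂ a ∈ μ.1, stoneHat a) = {μ} := by
  ext ν
  simp only [Set.mem_iInter, Set.mem_singleton_iff, stoneHat, Set.mem_setOf_eq]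
  constructor
  · intro h
    exact (uf_sub_eq (fun a ha => h a ha)).symm
  · rintro rfl a ha; exact ha

/-- The image of the Stone map is join-of-meet dense and meet-of-join dense in
the powerset of the Stone space: every set of ultrafilters is a union of
intersections, and an intersection of unions, of sets of the form `â`. -/
theorem stmt_1 {A : Type*} [BooleanAlgebra A] :
    ∀ U : Set {μ : Set A // IsUltrafilterBA μ},
      (∃ 𝒮 : Set (Set A), U = ⋃ S ∈ 𝒮, ⋂ a ∈ S, stoneHat a) ∧
      (∃ 𝒯 : Set (Set A), U = ⋂ S ∈ 𝒯, ⋃ a ∈ S, stoneHat a) := by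
  intro U
  constructor
  · refine ⟨Subtype.val '' U, ?_⟩
    ext ν
    simp only [Set.mem_iUnion, Set.mem_image, exists_prop]
    constructor
    · intro hν
      exact ⟨ν.1, ⟨ν, hν, rfl⟩, by rw [key_singleton]; rfl⟩
    · rintro ⟨S, ⟨μ, hμ, rfl⟩, hν⟩
      rw [key_singleton, Set.mem_singleton_iff] at hν
      subst hν; exact hμ
  · refine ⟨(fun ν : Set A => (·ᶜ) '' ν) '' (Subtype.val '' Uᶜ), ?_⟩
    ext μ
    simp only [Set.mem_iInter, Set.mem_iUnion, Set.mem_image, exists_prop, stoneHat,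
      Set.mem_setOf_eq]
    constructor
    · rintro h S ⟨T, ⟨ν, hν, rfl⟩, rfl⟩
      have hne : ¬ ν.1 ⊆ μ.1 := by
        intro hsub
        exact hν (uf_sub_eq hsub ▸ h)
      rw [Set.not_subset] at hne
      obtain ⟨a, ha, ha'⟩ := hne
      refine ⟨aᶜ, ⟨a, ha, rfl⟩, ?_⟩
      rcases μ.2.2.2.2.2 a with h1 | h1
      · exact absurd h1 ha'
      · exact h1
    · intro h
      by_contra hμ
      obtain ⟨b, ⟨a, ha, rfl⟩, hb⟩ :=
        h ((·ᶜ) '' μ.1) ⟨μ.1, ⟨μ, hμ, rfl⟩, rfl⟩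
      exact uf_not_both μ.2 ha hb
end

section
/- For a lattice embedding e : L → L' of a bounded lattice L into a complete lattice L', the compactness property (for all S, T ⊆ L with ⋀e(S) ≤ ⋁e(T) there are finite S' ⊆ S, T' ⊆ T with ⋀S' ≤ ⋁T' in L) is equivalent to the condition: for every filter F and ideal I of L with ⋀e(F) ≤ ⋁e(I), F ∩ I ≠ ∅. -/
/-- A (lattice) filter: a nonempty, upward-closed subset closed under binary meet. -/
def IsLatFilter {L : Type*} [Lattice L] (F : Set L) : Prop :=
  F.Nonempty ∧ (∀ a b : L, a ∈ F → a ≤ b → b ∈ F) ∧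
  (∀ a b : L, a ∈ F → b ∈ F → a ⊓ b ∈ F)

/-- A (lattice) ideal: a nonempty, downward-closed subset closed under binary join. -/
def IsLatIdeal {L : Type*} [Lattice L] (I : Set L) : Prop :=
  I.Nonempty ∧ (∀ a b : L, a ∈ I → b ≤ a → b ∈ I) ∧
  (∀ a b : L, a ∈ I → b ∈ I → a ⊔ b ∈ I)

lemma filter_finset_inf {L : Type*} [Lattice L] [BoundedOrder L] {F : Set L}
    (hF : IsLatFilter F) (S : Finset L) : ↑S ⊆ F → S.inf id ∈ F := by
  classical
  induction S using Finset.induction_on with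
  | empty =>
    intro _
    obtain ⟨x, hx⟩ := hF.1
    simpa using hF.2.1 x ⊤ hx le_top
  | @insert a s ha ih =>
    intro hins
    rw [Finset.inf_insert]
    exact hF.2.2 _ _ (hins (by simp)) (ih fun x hx => hins (by simp [hx]))

lemma ideal_finset_sup {L : Type*} [Lattice L] [BoundedOrder L] {I : Set L}
    (hI : IsLatIdeal I) (T : Finset L) : ↑T ⊆ I → T.sup id ∈ I := by
  classical
  induction T using Finset.induction_on with
  | empty =>
    intro _
    obtain ⟨x, hx⟩ := hI.1
    simpa using hI.2.1 x ⊥ hx bot_le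
  | @insert a s ha ih =>
    intro hins
    rw [Finset.sup_insert]
    exact hI.2.2 _ _ (hins (by simp)) (ih fun x hx => hins (by simp [hx]))

/-- For a lattice embedding `e : L → L'` of a bounded lattice into a complete
lattice, the compactness property is equivalent to the filter/ideal
formulation. -/
theorem stmt_3 {L L' : Type*} [Lattice L] [BoundedOrder L] [CompleteLattice L']
    (e : L → L') (hinj : Function.Injective e)
    (hinf : ∀ a b : L, e (a ⊓ b) = e a ⊓ e b)
    (hsup : ∀ a b : L, e (a ⊔ b) = e a ⊔ e b)
    (hbot : e ⊥ = ⊥) (htop : e ⊤ = ⊤) :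
    (∀ S T : Set L, sInf (e '' S) ≤ sSup (e '' T) →
        ∃ S' T' : Finset L, ↑S' ⊆ S ∧ ↑T' ⊆ T ∧ S'.inf id ≤ T'.sup id) ↔
    (∀ F I : Set L, IsLatFilter F → IsLatIdeal I →
        sInf (e '' F) ≤ sSup (e '' I) → (F ∩ I).Nonempty) := by
  classical
  constructor
  · intro h F I hF hI hle
    obtain ⟨S', T', hS', hT', hst⟩ := h F I hle
    refine ⟨S'.inf id, filter_finset_inf hF S' hS', hI.2.1 _ _ (ideal_finset_sup hI T' hT') hst⟩
  · intro h S T hle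
    set F : Set L := {a | ∃ S' : Finset L, ↑S' ⊆ S ∧ S'.inf id ≤ a} with hFdef
    set I : Set L := {a | ∃ T' : Finset L, ↑T' ⊆ T ∧ a ≤ T'.sup id} with hIdef
    have hF : IsLatFilter F := by
      refine ⟨⟨⊤, ∅, by simp⟩, ?_, ?_⟩
      · rintro a b ⟨S', h1, h2⟩ hab
        exact ⟨S', h1, h2.trans hab⟩
      · rintro a b ⟨Sa, h1, h2⟩ ⟨Sb, h3, h4⟩
        refine ⟨Sa ∪ Sb, ?_, ?_⟩
        · simp only [Finset.coe_union, Set.union_subset_iff]; exact ⟨h1, h3⟩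
        · exact le_inf ((Finset.inf_mono Finset.subset_union_left).trans h2)
            ((Finset.inf_mono Finset.subset_union_right).trans h4)
    have hI : IsLatIdeal I := by
      refine ⟨⟨⊥, ∅, by simp⟩, ?_, ?_⟩
      · rintro a b ⟨T', h1, h2⟩ hab
        exact ⟨T', h1, hab.trans h2⟩
      · rintro a b ⟨Ta, h1, h2⟩ ⟨Tb, h3, h4⟩
        refine ⟨Ta ∪ Tb, ?_, ?_⟩
        · simp only [Finset.coe_union, Set.union_subset_iff]; exact ⟨h1, h3⟩
        · exact sup_le (h2.trans (Finset.sup_mono Finset.subset_union_left))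
            (h4.trans (Finset.sup_mono Finset.subset_union_right))
    have hSF : S ⊆ F := fun a ha => ⟨{a}, by simpa using ha, by simp⟩
    have hTI : T ⊆ I := fun a ha => ⟨{a}, by simpa using ha, by simp⟩
    have hle' : sInf (e '' F) ≤ sSup (e '' I) :=
      (sInf_le_sInf (Set.image_mono (f := e) hSF)).trans
        (hle.trans (sSup_le_sSup (Set.image_mono (f := e) hTI)))
    obtain ⟨x, ⟨S', h1, h2⟩, ⟨T', h3, h4⟩⟩ := h F I hF hI hle'
    exact ⟨S', T', h1, h3, h2.trans h4⟩
end

section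
/- If the identity map on a bounded lattice L is a canonical extension (i.e., L is complete, L is trivially dense in itself, and the compactness condition holds for the identity embedding), then L has no infinite chains. -/
/-- If the identity map on a complete (bounded) lattice `L` satisfies the
compactness condition of canonical extensions, then `L` has no infinite
chains. -/
theorem stmt_4 {L : Type*} [CompleteLattice L]
    (hcompact : ∀ S T : Set L, sInf S ≤ sSup T →
      ∃ S' T' : Finset L, ↑S' ⊆ S ∧ ↑T' ⊆ T ∧ S'.inf id ≤ T'.sup id) :
    ∀ c : Set L, IsChain (· ≤ ·) c → c.Finite := by
  classical
  intro c hc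
  by_contra hfin
  rw [← Set.Infinite] at hfin
  -- Every nonempty subset of the chain contains its supremum.
  have hmax : ∀ T : Set L, T ⊆ c → T.Nonempty → sSup T ∈ T := by
    rintro T hTc ⟨t0, ht0⟩
    obtain ⟨S', T', hS', hT', hle⟩ := hcompact {sSup T} T (by simp)
    have h1 : sSup T ≤ S'.inf id := by
      apply Finset.le_inf
      intro b hb
      have hb' : b ∈ ({sSup T} : Set L) := hS' hb
      simp only [Set.mem_singleton_iff] at hb'
      simp [hb']
    have h2 : sSup T ≤ T'.sup id := h1.trans hle
    have hdir : DirectedOn (· ≤ ·) T := (hc.mono hTc).directedOn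
    obtain ⟨x, hx, hsup⟩ := Finset.sup_le_of_le_directed T ⟨t0, ht0⟩ hdir T'
      (fun y hy => ⟨y, hT' hy, le_refl _⟩)
    have hEq : sSup T = x := le_antisymm (h2.trans hsup) (le_sSup hx)
    exact hEq ▸ hx
  -- Every nonempty subset of the chain contains its infimum.
  have hmin : ∀ T : Set L, T ⊆ c → T.Nonempty → sInf T ∈ T := by
    rintro T hTc ⟨t0, ht0⟩
    obtain ⟨S', T', hS', hT', hle⟩ := hcompact T {sInf T} (by simp)
    have h2 : S'.inf id ≤ sInf T := by
      refine hle.trans (Finset.sup_le ?_)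
      intro b hb
      have hb' : b ∈ ({sInf T} : Set L) := hT' hb
      simp only [Set.mem_singleton_iff] at hb'
      simp [hb']
    have key : ∀ s : Finset L, ↑s ⊆ T → ∃ x ∈ T, x ≤ s.inf id := by
      intro s
      induction s using Finset.induction_on with
      | empty => exact fun _ => ⟨t0, ht0, by simp⟩
      | @insert a s ha ih =>
        intro hsub
        have haT : a ∈ T := hsub (by simp)
        obtain ⟨x, hx, hxle⟩ := ih (fun y hy => hsub (by simp [hy]))
        rcases hc.total (hTc haT) (hTc hx) with hax | hxa
        · exact ⟨a, haT, by
            simp only [Finset.inf_insert, id]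
            exact le_inf (le_refl a) (hax.trans hxle)⟩
        · exact ⟨x, hx, by
            simp only [Finset.inf_insert, id]
            exact le_inf hxa hxle⟩
    obtain ⟨x, hx, hxle⟩ := key S' hS'
    have hEq : sInf T = x := le_antisymm (sInf_le hx) (hxle.trans h2)
    exact hEq ▸ hx
  -- From infiniteness, get a strictly monotone sequence in `c`.
  let f := hfin.natEmbedding
  haveI : IsTrans L (· < ·) := ⟨fun _ _ _ => lt_trans⟩
  obtain ⟨g, hg | hg⟩ :=
    exists_increasing_or_nonincreasing_subseq (· < ·) (fun n => (f n : L))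
  · -- strictly increasing sequence: contradicts `hmax`
    set T : Set L := Set.range (fun n => (f (g n) : L)) with hT
    have hTc : T ⊆ c := by rintro _ ⟨n, rfl⟩; exact (f (g n)).2
    obtain ⟨n, hn⟩ := hmax T hTc ⟨_, ⟨0, rfl⟩⟩
    have h1 : (f (g (n + 1)) : L) ≤ sSup T := le_sSup ⟨n + 1, rfl⟩
    have h2 : (f (g n) : L) < (f (g (n + 1)) : L) := hg n (n + 1) (Nat.lt_succ_self n)
    have hn' : (f (g n) : L) = sSup T := hn
    have h3 := h2.trans_le h1
    rw [hn'] at h3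
    exact lt_irrefl _ h3
  · -- no increases: sequence is strictly decreasing; contradicts `hmin`
    have hdec : ∀ m n : ℕ, m < n → (f (g n) : L) < (f (g m) : L) := by
      intro m n hmn
      have hne : (f (g m) : L) ≠ (f (g n) : L) := by
        intro h
        exact absurd (g.injective (f.injective (Subtype.ext h))) hmn.ne
      rcases hc.total ((f (g m)).2) ((f (g n)).2) with h | h
      · exact absurd (lt_of_le_of_ne h hne) (hg m n hmn)
      · exact lt_of_le_of_ne h hne.symm
    set T : Set L := Set.range (fun n => (f (g n) : L)) with hT
    have hTc : T ⊆ c := by rintro _ ⟨n, rfl⟩; exact (f (g n)).2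
    obtain ⟨n, hn⟩ := hmin T hTc ⟨_, ⟨0, rfl⟩⟩
    have h1 : sInf T ≤ (f (g (n + 1)) : L) := sInf_le ⟨n + 1, rfl⟩
    have h2 : (f (g (n + 1)) : L) < (f (g n) : L) := hdec n (n + 1) (Nat.lt_succ_self n)
    have hn' : (f (g n) : L) = sInf T := hn
    have h3 := h1.trans_lt h2
    rw [hn'] at h3
    exact lt_irrefl _ h3
end

section
/- Let e : L → C be a canonical extension of a bounded lattice L. Then the poset of filter elements F(C) = {x ∈ C : x is a meet of elements of e(L)} is order-anti-isomorphic to the poset of lattice filters of L, via x ↦ {a ∈ L : x ≤ e(a)} with inverse F ↦ ⋀e(F). -/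
/-- `e : L → C` is a canonical extension of the bounded lattice `L`:
a dense and compact lattice completion. -/
def IsCanonExt {L C : Type*} [Lattice L] [BoundedOrder L] [CompleteLattice C]
    (e : L → C) : Prop :=
  Function.Injective e ∧
  (∀ a b : L, e (a ⊓ b) = e a ⊓ e b) ∧
  (∀ a b : L, e (a ⊔ b) = e a ⊔ e b) ∧
  e ⊥ = ⊥ ∧ e ⊤ = ⊤ ∧
  (∀ c : C, ∃ 𝒮 : Set (Set L), c = ⨆ S ∈ 𝒮, sInf (e '' S)) ∧
  (∀ c : C, ∃ 𝒮 : Set (Set L), c = ⨅ S ∈ 𝒮, sSup (e '' S)) ∧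
  (∀ S T : Set L, sInf (e '' S) ≤ sSup (e '' T) →
    ∃ S' T' : Finset L, ↑S' ⊆ S ∧ ↑T' ⊆ T ∧ S'.inf id ≤ T'.sup id)

/-- A filter element of the canonical extension: a meet of elements of `e(L)`. -/
def FilterElt {L C : Type*} [Lattice L] [BoundedOrder L] [CompleteLattice C]
    (e : L → C) (x : C) : Prop :=
  ∃ S : Set L, x = sInf (e '' S)

/-- An ideal element of the canonical extension: a join of elements of `e(L)`. -/
def IdealElt {L C : Type*} [Lattice L] [BoundedOrder L] [CompleteLattice C]
    (e : L → C) (y : C) : Prop :=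
  ∃ S : Set L, y = sSup (e '' S)

/-- The filter elements of a canonical extension form a poset anti-isomorphic
to the poset of lattice filters of `L`, via `x ↦ {a : x ≤ e a}` with inverse
`F ↦ ⋀ e(F)`. -/
theorem stmt_6 {L C : Type*} [Lattice L] [BoundedOrder L] [CompleteLattice C]
    (e : L → C) (he : IsCanonExt e) :
    (∀ x : C, FilterElt e x → IsLatFilter {a : L | x ≤ e a}) ∧
    (∀ F : Set L, IsLatFilter F → FilterElt e (sInf (e '' F))) ∧
    (∀ x : C, FilterElt e x → sInf (e '' {a : L | x ≤ e a}) = x) ∧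
    (∀ F : Set L, IsLatFilter F → {a : L | sInf (e '' F) ≤ e a} = F) ∧
    (∀ x y : C, FilterElt e x → FilterElt e y →
      (x ≤ y ↔ {a : L | y ≤ e a} ⊆ {a : L | x ≤ e a})) := by
  obtain ⟨hinj, hmeet, hjoin, hbot, htop, hd1, hd2, hcpt⟩ := he
  have hmono : ∀ a b : L, a ≤ b → e a ≤ e b := by
    intro a b hab
    have h : e (a ⊓ b) = e a ⊓ e b := hmeet a b
    rw [inf_eq_left.mpr hab] at h
    rw [h]; exact inf_le_right
  -- compactness specialized to a single element on the right
  have hkey : ∀ (S : Set L) (a : L), sInf (e '' S) ≤ e a →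
      ∃ S' : Finset L, ↑S' ⊆ S ∧ S'.inf id ≤ a := by
    intro S a h
    have h' : sInf (e '' S) ≤ sSup (e '' {a}) := by simpa using h
    obtain ⟨S', T', hS', hT', hle⟩ := hcpt S {a} h'
    refine ⟨S', hS', hle.trans ?_⟩
    apply Finset.sup_le
    intro b hb
    have hb' : b ∈ ({a} : Set L) := hT' hb
    simp only [Set.mem_singleton_iff] at hb'
    simp [hb']
  -- the subset relation S ⊆ {a | x ≤ e a} when x = sInf (e '' S)
  have hmemle : ∀ (S : Set L) (s : L), s ∈ S → sInf (e '' S) ≤ e s := by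
    intro S s hs
    exact sInf_le ⟨s, hs, rfl⟩
  refine ⟨?_, ?_, ?_, ?_, ?_⟩
  · rintro x ⟨S, rfl⟩
    refine ⟨⟨⊤, ?_⟩, ?_, ?_⟩
    · show sInf (e '' S) ≤ e ⊤
      rw [htop]; exact le_top
    · intro a b ha hab
      exact le_trans ha (hmono a b hab)
    · intro a b ha hb
      show sInf (e '' S) ≤ e (a ⊓ b)
      rw [hmeet]; exact le_inf ha hb
  · intro F _
    exact ⟨F, rfl⟩
  · rintro x ⟨S, rfl⟩
    apply le_antisymm
    · apply sInf_le_sInf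
      apply Set.image_mono
      intro s hs
      exact hmemle S s hs
    · apply le_sInf
      rintro c ⟨a, ha, rfl⟩
      exact ha
  · intro F hF
    obtain ⟨⟨c, hc⟩, hup, hinf⟩ := hF
    have htopF : ⊤ ∈ F := hup c ⊤ hc le_top
    have hfin : ∀ S' : Finset L, ↑S' ⊆ F → S'.inf id ∈ F := by
      intro S'
      classical
      induction S' using Finset.induction with
      | empty => intro _; simpa using htopF
      | @insert a s _ ih =>
        intro hsub
        rw [Finset.inf_insert]
        have ha : a ∈ F := hsub (Finset.mem_insert_self a s)
        have hs : ↑s ⊆ F := fun b hb => hsub (Finset.mem_insert_of_mem hb)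
        exact hinf _ _ ha (ih hs)
    ext a
    constructor
    · intro h
      obtain ⟨S', hS', hle⟩ := hkey F a h
      exact hup _ _ (hfin S' hS') hle
    · intro h
      exact hmemle F a h
  · rintro x y ⟨S, rfl⟩ ⟨T, rfl⟩
    constructor
    · intro hxy a hya
      exact le_trans hxy hya
    · intro hsub
      apply le_sInf
      rintro c ⟨a, ha, rfl⟩
      exact hsub (hmemle T a ha)
end

section
/- Let e : L → C be a canonical extension of a bounded lattice L, y an ideal element with ideal I_y, and x a filter element with filter F_x. Then y ≤ x in C if and only if for all a ∈ I_y and b ∈ F_x, a ≤ b in L. -/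
/-- For an ideal element `y` and a filter element `x` of a canonical extension,
`y ≤ x` iff every element of the ideal `I_y` is below every element of the
filter `F_x`. -/
theorem stmt_9 {L C : Type*} [Lattice L] [BoundedOrder L] [CompleteLattice C]
    (e : L → C) (he : IsCanonExt e) (x y : C)
    (hx : FilterElt e x) (hy : IdealElt e y) :
    y ≤ x ↔ ∀ a b : L, e a ≤ y → x ≤ e b → a ≤ b := by
  obtain ⟨hinj, hinf, -⟩ := he
  have hmono : ∀ a b : L, a ≤ b → e a ≤ e b := by
    intro a b hab
    have : e (a ⊓ b) = e a ⊓ e b := hinf a b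
    rw [inf_eq_left.mpr hab] at this
    exact le_of_eq_of_le this inf_le_right
  have hrefl : ∀ a b : L, e a ≤ e b → a ≤ b := by
    intro a b hab
    have : e (a ⊓ b) = e a := by rw [hinf a b, inf_eq_left.mpr hab]
    exact inf_eq_left.mp (hinj this)
  constructor
  · intro h a b hay hxb
    exact hrefl a b ((hay.trans h).trans hxb)
  · intro h
    obtain ⟨S, rfl⟩ := hx
    obtain ⟨T, rfl⟩ := hy
    apply sSup_le
    rintro _ ⟨a, haT, rfl⟩
    apply le_sInf
    rintro _ ⟨b, hbS, rfl⟩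
    exact hmono a b (h a b (le_sSup ⟨a, haT, rfl⟩) (sInf_le ⟨b, hbS, rfl⟩))
end

section
/- In the canonical extension C of a bounded lattice L, every family Y of down-directed subsets of L satisfies the restricted complete distributive law: ⋁{⋀Y : Y ∈ 𝒴} = ⋀{⋁Z : Z ∈ 𝒴♯}, where 𝒴♯ = {Z ⊆ L : Z ∩ Y ≠ ∅ for all Y ∈ 𝒴}. -/
/-- Restricted complete distributivity in canonical extensions: for any family
`𝒴` of down-directed subsets of `L`,
`⋁{⋀Y : Y ∈ 𝒴} = ⋀{⋁Z : Z ∈ 𝒴♯}` where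
`𝒴♯ = {Z ⊆ L : Z ∩ Y ≠ ∅ for all Y ∈ 𝒴}`. -/
theorem stmt_10 {L C : Type*} [Lattice L] [BoundedOrder L] [CompleteLattice C]
    (e : L → C) (he : IsCanonExt e)
    (𝒴 : Set (Set L)) (hdir : ∀ Y ∈ 𝒴, DirectedOn (· ≥ ·) Y) :
    (⨆ Y ∈ 𝒴, sInf (e '' Y)) =
      ⨅ Z ∈ {Z : Set L | ∀ Y ∈ 𝒴, (Z ∩ Y).Nonempty}, sSup (e '' Z) := by
  classical
  obtain ⟨hinj, hinfp, hsupp, hbot, htop, hdense1, hdense2, hcpt⟩ := he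
  have emono : Monotone e := by
    intro a b hab
    have h := hinfp a b
    rw [inf_eq_left.mpr hab] at h
    exact le_of_eq_of_le h inf_le_right
  -- finite sups land below sSup of image
  have finsup : ∀ (S : Set L) (S' : Finset L), ↑S' ⊆ S →
      e (S'.sup id) ≤ sSup (e '' S) := by
    intro S S' hS'
    induction S' using Finset.induction with
    | empty => simp [hbot]
    | @insert a s ha ih =>
      rw [Finset.sup_insert, hsupp]
      have h1 : e a ≤ sSup (e '' S) :=
        le_sSup ⟨a, hS' (Finset.mem_insert_self a s), rfl⟩
      have h2 := ih (fun x hx => hS' (Finset.mem_insert_of_mem hx))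
      exact sup_le h1 h2
  -- down-directed nonempty sets have lower bounds of finite subsets
  have dirlb : ∀ Y ∈ 𝒴, Y.Nonempty → ∀ Y' : Finset L, ↑Y' ⊆ Y →
      ∃ y ∈ Y, y ≤ Y'.inf id := by
    intro Y hY hne Y' hY'
    induction Y' using Finset.induction with
    | empty => obtain ⟨y, hy⟩ := hne; exact ⟨y, hy, by simp⟩
    | @insert a s ha ih =>
      obtain ⟨y, hyY, hy⟩ := ih (fun x hx => hY' (Finset.mem_insert_of_mem hx))
      have haY : a ∈ Y := hY' (Finset.mem_insert_self a s)
      obtain ⟨z, hzY, hza, hzy⟩ := hdir Y hY a haY y hyY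
      refine ⟨z, hzY, ?_⟩
      rw [Finset.inf_insert]
      exact le_inf hza (le_trans hzy hy)
  apply le_antisymm
  · apply iSup₂_le
    intro Y hY
    apply le_iInf₂
    intro Z hZ
    obtain ⟨z, hzZ, hzY⟩ := hZ Y hY
    exact le_trans (sInf_le ⟨z, hzY, rfl⟩) (le_sSup ⟨z, hzZ, rfl⟩)
  · by_cases hE : ∅ ∈ 𝒴
    · have : (⊤ : C) ≤ ⨆ Y ∈ 𝒴, sInf (e '' Y) := by
        have := le_iSup₂ (f := fun Y (_ : Y ∈ 𝒴) => sInf (e '' Y)) ∅ hE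
        simpa using this
      exact le_trans le_top this
    · obtain ⟨𝒮, hA⟩ := hdense2 (⨆ Y ∈ 𝒴, sInf (e '' Y))
      rw [hA]
      apply le_iInf₂
      intro S hS
      have hAS : (⨆ Y ∈ 𝒴, sInf (e '' Y)) ≤ sSup (e '' S) := by
        rw [hA]; exact iInf₂_le S hS
      set Z₀ : Set L := {y : L | e y ≤ sSup (e '' S)} with hZ₀
      have hZmem : Z₀ ∈ {Z : Set L | ∀ Y ∈ 𝒴, (Z ∩ Y).Nonempty} := by
        intro Y hY
        have hYne : Y.Nonempty :=
          Set.nonempty_iff_ne_empty.mpr (fun h => hE (h ▸ hY))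
        have hle : sInf (e '' Y) ≤ sSup (e '' S) :=
          le_trans (le_iSup₂ (f := fun Y (_ : Y ∈ 𝒴) => sInf (e '' Y)) Y hY) hAS
        obtain ⟨Y', S', hY', hS', hfin⟩ := hcpt Y S hle
        obtain ⟨y, hyY, hy⟩ := dirlb Y hY hYne Y' hY'
        have : e y ≤ sSup (e '' S) :=
          le_trans (emono (le_trans hy hfin)) (finsup S S' hS')
        exact ⟨y, this, hyY⟩
      refine le_trans (iInf₂_le Z₀ hZmem) ?_
      apply sSup_le
      rintro x ⟨y, hy, rfl⟩
      exact hy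
end

section
/- Let L be a bounded lattice and δ the topology on its canonical extension C generated by the intervals [x, y] with x a filter element and y an ideal element. Then (C, δ) is Hausdorff, the image of L is topologically dense in (C, δ), and the isolated points of (C, δ) are exactly the elements of L. -/
section Aux

variable {L C : Type*} [Lattice L] [BoundedOrder L] [CompleteLattice C] {e : L → C}

/-- The filter generated by a subset of `L`. -/
def genF {L : Type*} [Lattice L] [BoundedOrder L] (S : Set L) : Set L :=
  {a | ∃ S' : Finset L, ↑S' ⊆ S ∧ S'.inf id ≤ a}

/-- The ideal generated by a subset of `L`. -/
def genI {L : Type*} [Lattice L] [BoundedOrder L] (T : Set L) : Set L :=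
  {a | ∃ T' : Finset L, ↑T' ⊆ T ∧ a ≤ T'.sup id}

lemma subset_genF {S : Set L} {a : L} (ha : a ∈ S) : a ∈ genF S :=
  ⟨{a}, by simpa using ha, by simp⟩

lemma subset_genI {T : Set L} {a : L} (ha : a ∈ T) : a ∈ genI T :=
  ⟨{a}, by simpa using ha, by simp⟩

lemma genF_up {S : Set L} {a b : L} (ha : a ∈ genF S) (hab : a ≤ b) : b ∈ genF S := by
  obtain ⟨A, hA, h⟩ := ha; exact ⟨A, hA, h.trans hab⟩

lemma genI_down {T : Set L} {a b : L} (ha : a ∈ genI T) (hba : b ≤ a) : b ∈ genI T := by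
  obtain ⟨A, hA, h⟩ := ha; exact ⟨A, hA, hba.trans h⟩

lemma genF_inf₂ {S : Set L} {a b : L} (ha : a ∈ genF S) (hb : b ∈ genF S) :
    a ⊓ b ∈ genF S := by
  classical
  obtain ⟨A, hA, h⟩ := ha; obtain ⟨B, hB, h'⟩ := hb
  refine ⟨A ∪ B, ?_, ?_⟩
  · rw [Finset.coe_union]; exact Set.union_subset hA hB
  · rw [Finset.inf_union]; exact inf_le_inf h h'

lemma genI_sup₂ {T : Set L} {a b : L} (ha : a ∈ genI T) (hb : b ∈ genI T) :
    a ⊔ b ∈ genI T := by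
  classical
  obtain ⟨A, hA, h⟩ := ha; obtain ⟨B, hB, h'⟩ := hb
  refine ⟨A ∪ B, ?_, ?_⟩
  · rw [Finset.coe_union]; exact Set.union_subset hA hB
  · rw [Finset.sup_union]; exact sup_le_sup h h'

lemma genF_finset {S : Set L} (A : Finset L) (hA : ↑A ⊆ genF S) : A.inf id ∈ genF S := by
  classical
  induction A using Finset.induction_on with
  | empty => exact ⟨∅, by simp, by simp⟩
  | @insert a s ha ih =>
      rw [Finset.inf_insert]
      exact genF_inf₂ (hA (by simp)) (ih fun b hb => hA (by simp [hb]))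

lemma genI_finset {T : Set L} (A : Finset L) (hA : ↑A ⊆ genI T) : A.sup id ∈ genI T := by
  classical
  induction A using Finset.induction_on with
  | empty => exact ⟨∅, by simp, by simp⟩
  | @insert a s ha ih =>
      rw [Finset.sup_insert]
      exact genI_sup₂ (hA (by simp)) (ih fun b hb => hA (by simp [hb]))

lemma CE.mono (he : IsCanonExt e) : Monotone e := by
  intro a b hab
  have h : e a ⊓ e b = e a := by rw [← he.2.1, inf_eq_left.mpr hab]
  exact inf_eq_left.mp h

lemma CE.finsetInf (he : IsCanonExt e) (A : Finset L) :
    e (A.inf id) = A.inf fun a => e a := by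
  classical
  induction A using Finset.induction_on with
  | empty => simpa using he.2.2.2.2.1
  | @insert a s ha ih => simp [he.2.1, ih]

lemma CE.finsetSup (he : IsCanonExt e) (A : Finset L) :
    e (A.sup id) = A.sup fun a => e a := by
  classical
  induction A using Finset.induction_on with
  | empty => simpa using he.2.2.2.1
  | @insert a s ha ih => simp [he.2.2.1, ih]

lemma CE.sInf_le_genF (he : IsCanonExt e) {S : Set L} {a : L} (ha : a ∈ genF S) :
    sInf (e '' S) ≤ e a := by
  obtain ⟨A, hA, h⟩ := ha
  calc sInf (e '' S) ≤ A.inf fun b => e b :=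
        Finset.le_inf fun b hb => sInf_le ⟨b, hA hb, rfl⟩
    _ = e (A.inf id) := (CE.finsetInf he A).symm
    _ ≤ e a := CE.mono he h

lemma CE.genI_le_sSup (he : IsCanonExt e) {T : Set L} {a : L} (ha : a ∈ genI T) :
    e a ≤ sSup (e '' T) := by
  obtain ⟨A, hA, h⟩ := ha
  calc e a ≤ e (A.sup id) := CE.mono he h
    _ = A.sup fun b => e b := CE.finsetSup he A
    _ ≤ sSup (e '' T) := Finset.sup_le fun b hb => le_sSup ⟨b, hA hb, rfl⟩

lemma CE.sInf_genF (he : IsCanonExt e) (S : Set L) : sInf (e '' genF S) = sInf (e '' S) := by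
  refine le_antisymm (sInf_le_sInf (Set.image_mono (f := e) fun a ha => subset_genF ha)) ?_
  refine le_sInf ?_
  rintro _ ⟨a, ha, rfl⟩
  exact CE.sInf_le_genF he ha

lemma CE.sSup_genI (he : IsCanonExt e) (T : Set L) : sSup (e '' genI T) = sSup (e '' T) := by
  refine le_antisymm ?_ (sSup_le_sSup (Set.image_mono (f := e) fun a ha => subset_genI ha))
  refine sSup_le ?_
  rintro _ ⟨a, ha, rfl⟩
  exact CE.genI_le_sSup he ha

/-- Interpolation: a filter element below an ideal element has a lattice element between. -/
lemma CE.interp (he : IsCanonExt e) {x y : C} (hx : FilterElt e x) (hy : IdealElt e y)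
    (hxy : x ≤ y) : ∃ a : L, x ≤ e a ∧ e a ≤ y := by
  obtain ⟨S, rfl⟩ := hx
  obtain ⟨T, rfl⟩ := hy
  obtain ⟨A, B, hA, hB, h⟩ := he.2.2.2.2.2.2.2 S T hxy
  refine ⟨A.inf id, CE.sInf_le_genF he ⟨A, hA, le_rfl⟩, ?_⟩
  exact CE.genI_le_sSup he (genI_down ⟨B, hB, le_rfl⟩ h)

/-- Filter elements are closed under binary joins. -/
lemma CE.filterSup (he : IsCanonExt e) {x₁ x₂ : C} (h₁ : FilterElt e x₁)
    (h₂ : FilterElt e x₂) : FilterElt e (x₁ ⊔ x₂) := by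
  obtain ⟨S₁, rfl⟩ := h₁
  obtain ⟨S₂, rfl⟩ := h₂
  refine ⟨genF S₁ ∩ genF S₂, le_antisymm ?_ ?_⟩
  · refine le_sInf ?_
    rintro _ ⟨a, ⟨ha₁, ha₂⟩, rfl⟩
    exact sup_le (CE.sInf_le_genF he ha₁) (CE.sInf_le_genF he ha₂)
  · obtain ⟨𝒯, h𝒯⟩ := he.2.2.2.2.2.2.1 (sInf (e '' S₁) ⊔ sInf (e '' S₂))
    rw [h𝒯]
    refine le_iInf₂ fun T hT => ?_
    have hle : sInf (e '' S₁) ⊔ sInf (e '' S₂) ≤ sSup (e '' T) :=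
      h𝒯.le.trans (iInf₂_le T hT)
    obtain ⟨A₁, B₁, hA₁, hB₁, hab₁⟩ := he.2.2.2.2.2.2.2 S₁ (genI T)
      (by rw [CE.sSup_genI he]; exact le_sup_left.trans hle)
    obtain ⟨A₂, B₂, hA₂, hB₂, hab₂⟩ := he.2.2.2.2.2.2.2 S₂ (genI T)
      (by rw [CE.sSup_genI he]; exact le_sup_right.trans hle)
    have hb₁ : A₁.inf id ∈ genF S₁ := ⟨A₁, hA₁, le_rfl⟩
    have hb₂ : A₂.inf id ∈ genF S₂ := ⟨A₂, hA₂, le_rfl⟩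
    set b := A₁.inf id ⊔ A₂.inf id with hbdef
    have hbI : b ∈ genI T :=
      genI_sup₂ (genI_down (genI_finset B₁ hB₁) hab₁) (genI_down (genI_finset B₂ hB₂) hab₂)
    calc sInf (e '' (genF S₁ ∩ genF S₂)) ≤ e b :=
          sInf_le ⟨b, ⟨genF_up hb₁ le_sup_left, genF_up hb₂ le_sup_right⟩, rfl⟩
      _ ≤ sSup (e '' T) := CE.genI_le_sSup he hbI

/-- Ideal elements are closed under binary meets. -/
lemma CE.idealInf (he : IsCanonExt e) {y₁ y₂ : C} (h₁ : IdealElt e y₁)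
    (h₂ : IdealElt e y₂) : IdealElt e (y₁ ⊓ y₂) := by
  obtain ⟨T₁, rfl⟩ := h₁
  obtain ⟨T₂, rfl⟩ := h₂
  refine ⟨genI T₁ ∩ genI T₂, le_antisymm ?_ ?_⟩
  · obtain ⟨𝒮, h𝒮⟩ := he.2.2.2.2.2.1 (sSup (e '' T₁) ⊓ sSup (e '' T₂))
    rw [h𝒮]
    refine iSup₂_le fun S hS => ?_
    have hle : sInf (e '' S) ≤ sSup (e '' T₁) ⊓ sSup (e '' T₂) :=
      (le_iSup₂ S hS).trans h𝒮.ge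
    obtain ⟨A₁, B₁, hA₁, hB₁, hab₁⟩ := he.2.2.2.2.2.2.2 (genF S) T₁
      (by rw [CE.sInf_genF he]; exact hle.trans inf_le_left)
    obtain ⟨A₂, B₂, hA₂, hB₂, hab₂⟩ := he.2.2.2.2.2.2.2 (genF S) T₂
      (by rw [CE.sInf_genF he]; exact hle.trans inf_le_right)
    have ha₁ : B₁.sup id ∈ genI T₁ := ⟨B₁, hB₁, le_rfl⟩
    have ha₂ : B₂.sup id ∈ genI T₂ := ⟨B₂, hB₂, le_rfl⟩
    set b := B₁.sup id ⊓ B₂.sup id with hbdef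
    have hbF : b ∈ genF S :=
      genF_inf₂ (genF_up (genF_finset A₁ hA₁) hab₁) (genF_up (genF_finset A₂ hA₂) hab₂)
    calc sInf (e '' S) ≤ e b := CE.sInf_le_genF he hbF
      _ ≤ sSup (e '' (genI T₁ ∩ genI T₂)) :=
          le_sSup ⟨b, ⟨genI_down ha₁ inf_le_left, genI_down ha₂ inf_le_right⟩, rfl⟩
  · refine sSup_le ?_
    rintro _ ⟨a, ⟨ha₁, ha₂⟩, rfl⟩
    exact le_inf (CE.genI_le_sSup he ha₁) (CE.genI_le_sSup he ha₂)

end Aux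

/-- With the topology `δ` on the canonical extension `C` generated by the
intervals `[x, y]` (`x` a filter element, `y` an ideal element), the space
`(C, δ)` is Hausdorff, the image of `L` is dense, and the isolated points are
exactly the points of `e(L)`. -/
theorem stmt_12 {L C : Type*} [Lattice L] [BoundedOrder L] [CompleteLattice C]
    (e : L → C) (he : IsCanonExt e) :
    let δ : TopologicalSpace C := TopologicalSpace.generateFrom
      {U : Set C | ∃ x y : C, FilterElt e x ∧ IdealElt e y ∧ U = Set.Icc x y}
    @T2Space C δ ∧ @Dense C δ (Set.range e) ∧
      ∀ c : C, c ∈ Set.range e ↔ @IsOpen C δ {c} := by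
  intro δ
  have hbot : FilterElt e (⊥ : C) := ⟨{⊥}, by simp [he.2.2.2.1]⟩
  have htop : IdealElt e (⊤ : C) := ⟨{⊤}, by simp [he.2.2.2.2.1]⟩
  have heF : ∀ a : L, FilterElt e (e a) := fun a => ⟨{a}, by simp⟩
  have heI : ∀ a : L, IdealElt e (e a) := fun a => ⟨{a}, by simp⟩
  have basis : @TopologicalSpace.IsTopologicalBasis C δ
      {U : Set C | ∃ x y : C, FilterElt e x ∧ IdealElt e y ∧ U = Set.Icc x y} := by
    refine ⟨?_, ?_, rfl⟩
    · rintro U ⟨x₁, y₁, hx₁, hy₁, rfl⟩ V ⟨x₂, y₂, hx₂, hy₂, rfl⟩ c hc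
      refine ⟨Set.Icc (x₁ ⊔ x₂) (y₁ ⊓ y₂),
        ⟨x₁ ⊔ x₂, y₁ ⊓ y₂, CE.filterSup he hx₁ hx₂, CE.idealInf he hy₁ hy₂, rfl⟩, ?_, ?_⟩
      · rw [Set.Icc_inter_Icc] at hc; exact hc
      · rw [Set.Icc_inter_Icc]
    · refine Set.eq_univ_iff_forall.mpr fun c => ?_
      exact ⟨Set.Icc ⊥ ⊤, ⟨⊥, ⊤, hbot, htop, rfl⟩, Set.mem_Icc.mpr ⟨bot_le, le_top⟩⟩
  have sep : ∀ c d : C, ¬ c ≤ d → ∃ u v : Set C,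
      @IsOpen C δ u ∧ @IsOpen C δ v ∧ c ∈ u ∧ d ∈ v ∧ Disjoint u v := by
    intro c d hcd
    obtain ⟨𝒮, h𝒮⟩ := he.2.2.2.2.2.1 c
    have hex : ∃ S ∈ 𝒮, ¬ sInf (e '' S) ≤ d := by
      by_contra h
      push_neg at h
      exact hcd (h𝒮.le.trans (iSup₂_le h))
    obtain ⟨S, hS, hSd⟩ := hex
    have hxc : sInf (e '' S) ≤ c := (le_iSup₂ S hS).trans h𝒮.ge
    obtain ⟨𝒯, h𝒯⟩ := he.2.2.2.2.2.2.1 d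
    have hex' : ∃ T ∈ 𝒯, ¬ sInf (e '' S) ≤ sSup (e '' T) := by
      by_contra h
      push_neg at h
      exact hSd ((le_iInf₂ h).trans h𝒯.ge)
    obtain ⟨T, hT, hxT⟩ := hex'
    have hdy : d ≤ sSup (e '' T) := h𝒯.le.trans (iInf₂_le T hT)
    refine ⟨Set.Icc (sInf (e '' S)) ⊤, Set.Icc ⊥ (sSup (e '' T)),
      basis.isOpen ⟨sInf (e '' S), ⊤, ⟨S, rfl⟩, htop, rfl⟩,
      basis.isOpen ⟨⊥, sSup (e '' T), hbot, ⟨T, rfl⟩, rfl⟩,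
      ⟨hxc, le_top⟩, ⟨bot_le, hdy⟩, ?_⟩
    rw [Set.disjoint_left]
    rintro z ⟨hz₁, -⟩ ⟨-, hz₂⟩
    exact hxT (hz₁.trans hz₂)
  refine ⟨?_, ?_, ?_⟩
  · refine @T2Space.mk C δ fun c d hcd => ?_
    have : ¬ c ≤ d ∨ ¬ d ≤ c := by
      by_contra h
      push_neg at h
      exact hcd (le_antisymm h.1 h.2)
    rcases this with h | h
    · exact sep c d h
    · obtain ⟨u, v, hu, hv, hdu, hcv, huv⟩ := sep d c h
      exact ⟨v, u, hv, hu, hcv, hdu, huv.symm⟩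
  · rw [basis.dense_iff]
    rintro o ⟨x, y, hx, hy, rfl⟩ ⟨z, hz⟩
    obtain ⟨a, ha₁, ha₂⟩ := CE.interp he hx hy (hz.1.trans hz.2)
    exact ⟨e a, ⟨ha₁, ha₂⟩, a, rfl⟩
  · intro c
    constructor
    · rintro ⟨a, rfl⟩
      have h : ({e a} : Set C) = Set.Icc (e a) (e a) := (Set.Icc_self _).symm
      rw [h]
      exact basis.isOpen ⟨e a, e a, heF a, heI a, rfl⟩
    · intro hopen
      obtain ⟨o, ⟨x, y, hx, hy, rfl⟩, hco, hsub⟩ := basis.isOpen_iff.mp hopen c rfl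
      have hxy : x ≤ y := hco.1.trans hco.2
      have hxc : x = c := hsub ⟨le_refl x, hxy⟩
      have hyc : y = c := hsub ⟨hxy, le_refl y⟩
      obtain ⟨a, ha₁, ha₂⟩ := CE.interp he hx hy hxy
      exact ⟨a, le_antisymm (ha₂.trans hyc.le) (hxc ▸ ha₁)⟩
end

section
/- Let h : K → L be a homomorphism of bounded lattices. Then the canonical lifting h^δ : K^δ → L^δ, defined by h^δ(u) = ⋁{⋀h([x,y]∩K) : filter element x ≤ u ≤ ideal element y}, is a complete lattice homomorphism, and it is continuous with respect to the interval topologies on K^δ and L^δ. -/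
/-- The canonical lifting of a map `h : K → L` to the canonical extensions:
`h^δ(u) = ⋁ { ⋀ e_L(h([x,y] ∩ K)) : filter elt x ≤ u ≤ ideal elt y }`. -/
noncomputable def canLift {K L CK CL : Type*}
    [Lattice K] [BoundedOrder K] [Lattice L] [BoundedOrder L]
    [CompleteLattice CK] [CompleteLattice CL]
    (eK : K → CK) (eL : L → CL) (h : K → L) (u : CK) : CL :=
  sSup {z : CL | ∃ x y : CK, FilterElt eK x ∧ IdealElt eK y ∧
    x ≤ u ∧ u ≤ y ∧
    z = sInf (eL '' (h '' {a : K | x ≤ eK a ∧ eK a ≤ y}))}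

namespace CanExtAux

lemma mono_of_inf {α β : Type*} [SemilatticeInf α] [SemilatticeInf β] {g : α → β}
    (ginf : ∀ a b, g (a ⊓ b) = g a ⊓ g b) : Monotone g := by
  intro a b hab
  have h1 : g (a ⊓ b) = g a ⊓ g b := ginf a b
  rw [inf_eq_left.2 hab] at h1
  exact h1.le.trans inf_le_right

lemma finsetInf_le {α β : Type*} [Lattice α] [BoundedOrder α] [CompleteLattice β]
    {g : α → β} (gtop : g ⊤ = ⊤) (ginf : ∀ a b, g (a ⊓ b) = g a ⊓ g b)
    {x : β} (s : Finset α) (H : ∀ a ∈ s, x ≤ g a) : x ≤ g (s.inf id) := by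
  classical
  induction s using Finset.induction_on with
  | empty => simp [gtop]
  | @insert a s ha ih =>
      rw [Finset.inf_insert, ginf]
      exact le_inf (H a (by simp)) (ih fun b hb => H b (by simp [hb]))

lemma finsetSup_le {α β : Type*} [Lattice α] [BoundedOrder α] [CompleteLattice β]
    {g : α → β} (gbot : g ⊥ = ⊥) (gsup : ∀ a b, g (a ⊔ b) = g a ⊔ g b)
    {y : β} (s : Finset α) (H : ∀ a ∈ s, g a ≤ y) : g (s.sup id) ≤ y := by
  classical
  induction s using Finset.induction_on with
  | empty => simp [gbot]
  | @insert a s ha ih =>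
      rw [Finset.sup_insert, gsup]
      exact sup_le (H a (by simp)) (ih fun b hb => H b (by simp [hb]))

variable {K C : Type*} [Lattice K] [BoundedOrder K] [CompleteLattice C]

lemma cpt {e : K → C} (he : IsCanonExt e) {S T : Set K}
    (hST : sInf (e '' S) ≤ sSup (e '' T)) :
    ∃ a c : K, sInf (e '' S) ≤ e a ∧ a ≤ c ∧ e c ≤ sSup (e '' T) := by
  obtain ⟨S', T', hS', hT', hle⟩ := he.2.2.2.2.2.2.2 S T hST
  refine ⟨S'.inf id, T'.sup id, ?_, hle, ?_⟩
  · exact finsetInf_le he.2.2.2.2.1 he.2.1 S'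
      (fun a ha => sInf_le ⟨a, hS' ha, rfl⟩)
  · exact finsetSup_le he.2.2.2.1 he.2.2.1 T'
      (fun a ha => le_sSup ⟨a, hT' ha, rfl⟩)

lemma dense_filter {e : K → C} (he : IsCanonExt e) (u w : C)
    (H : ∀ x, FilterElt e x → x ≤ u → x ≤ w) : u ≤ w := by
  obtain ⟨𝒮, h𝒮⟩ := he.2.2.2.2.2.1 u
  calc u = ⨆ S ∈ 𝒮, sInf (e '' S) := h𝒮
    _ ≤ w := by
      refine iSup₂_le fun S hS => H _ ⟨S, rfl⟩ ?_
      rw [h𝒮]; exact le_iSup₂ (f := fun S _ => sInf (e '' S)) S hS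

lemma dense_ideal {e : K → C} (he : IsCanonExt e) (u w : C)
    (H : ∀ y, IdealElt e y → u ≤ y → w ≤ y) : w ≤ u := by
  obtain ⟨𝒮, h𝒮⟩ := he.2.2.2.2.2.2.1 u
  calc w ≤ ⨅ S ∈ 𝒮, sSup (e '' S) := by
        refine le_iInf₂ fun S hS => H _ ⟨S, rfl⟩ ?_
        rw [h𝒮]; exact iInf₂_le (f := fun S _ => sSup (e '' S)) S hS
    _ = u := h𝒮.symm


section Main

variable {K L CK CL : Type*}
  [Lattice K] [BoundedOrder K] [Lattice L] [BoundedOrder L]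
  [CompleteLattice CK] [CompleteLattice CL]
  {eK : K → CK} {eL : L → CL} {h : K → L}

/-- the sigma-lift on filter elements -/
noncomputable def fσ (eK : K → CK) (eL : L → CL) (h : K → L) (x : CK) : CL :=
  sInf (eL '' (h '' {a : K | x ≤ eK a}))

/-- the pi-lift on ideal elements -/
noncomputable def gπ (eK : K → CK) (eL : L → CL) (h : K → L) (y : CK) : CL :=
  sSup (eL '' (h '' {a : K | eK a ≤ y}))

variable (heK : IsCanonExt eK) (heL : IsCanonExt eL)
  (hinf : ∀ a b : K, h (a ⊓ b) = h a ⊓ h b)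
  (hsup : ∀ a b : K, h (a ⊔ b) = h a ⊔ h b)
  (hbot : h ⊥ = ⊥) (htop : h ⊤ = ⊤)

include hinf htop in
lemma exists_preimage_inf (heKinf : ∀ a b, eK (a ⊓ b) = eK a ⊓ eK b)
    (heKtop : eK ⊤ = ⊤)
    {x : CK} (B : Finset L) (hB : ∀ b ∈ B, ∃ a : K, x ≤ eK a ∧ h a = b) :
    ∃ a : K, x ≤ eK a ∧ h a ≤ B.inf id := by
  classical
  induction B using Finset.induction_on with
  | empty => exact ⟨⊤, by simp [heKtop], by simp [htop]⟩
  | @insert b B hb ih =>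
      obtain ⟨a₀, ha₀x, ha₀b⟩ := hB b (by simp)
      obtain ⟨a₁, ha₁x, ha₁⟩ := ih (fun c hc => hB c (by simp [hc]))
      refine ⟨a₀ ⊓ a₁, ?_, ?_⟩
      · rw [heKinf]; exact le_inf ha₀x ha₁x
      · rw [Finset.inf_insert, hinf]
        exact inf_le_inf (le_of_eq ha₀b) ha₁

include hsup hbot in
lemma exists_preimage_sup (heKsup : ∀ a b, eK (a ⊔ b) = eK a ⊔ eK b)
    (heKbot : eK ⊥ = ⊥)
    {y : CK} (B : Finset L) (hB : ∀ b ∈ B, ∃ a : K, eK a ≤ y ∧ h a = b) :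
    ∃ a : K, eK a ≤ y ∧ B.sup id ≤ h a := by
  classical
  induction B using Finset.induction_on with
  | empty => exact ⟨⊥, by simp [heKbot], by simp [hbot]⟩
  | @insert b B hb ih =>
      obtain ⟨a₀, ha₀y, ha₀b⟩ := hB b (by simp)
      obtain ⟨a₁, ha₁y, ha₁⟩ := ih (fun c hc => hB c (by simp [hc]))
      refine ⟨a₀ ⊔ a₁, ?_, ?_⟩
      · rw [heKsup]; exact sup_le ha₀y ha₁y
      · rw [Finset.sup_insert, hsup]
        exact sup_le_sup (ge_of_eq ha₀b) ha₁

include heK heL hinf hsup hbot in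
lemma bridge_up {q : CL} {c : K}
    (hc : eK c ≤ sSup (eK '' {a : K | eL (h a) ≤ q})) : eL (h c) ≤ q := by
  have h1 : sInf (eK '' {c}) ≤ sSup (eK '' {a : K | eL (h a) ≤ q}) := by
    simpa using hc
  obtain ⟨S', T', hS', hT', hle⟩ := heK.2.2.2.2.2.2.2 _ _ h1
  have hcS : c ≤ S'.inf id :=
    Finset.le_inf fun b hb => le_of_eq (hS' hb).symm
  have hmono : Monotone (fun a : K => eL (h a)) :=
    mono_of_inf (fun a b => by simp only [hinf, heL.2.1])
  have h2 : eL (h (T'.sup id)) ≤ q :=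
    finsetSup_le (g := fun a : K => eL (h a))
      (by simp [hbot, heL.2.2.2.1])
      (fun a b => by simp only [hsup, heL.2.2.1]) T'
      (fun a ha => hT' ha)
  exact (hmono (hcS.trans hle)).trans h2

include heK heL hinf htop in
lemma bridge_down {p : CL} {c : K}
    (hc : sInf (eK '' {a : K | p ≤ eL (h a)}) ≤ eK c) : p ≤ eL (h c) := by
  have h1 : sInf (eK '' {a : K | p ≤ eL (h a)}) ≤ sSup (eK '' {c}) := by
    simpa using hc
  obtain ⟨S', T', hS', hT', hle⟩ := heK.2.2.2.2.2.2.2 _ _ h1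
  have hcT : T'.sup id ≤ c :=
    Finset.sup_le fun b hb => le_of_eq (hT' hb)
  have hmono : Monotone (fun a : K => eL (h a)) :=
    mono_of_inf (fun a b => by simp only [hinf, heL.2.1])
  have h2 : p ≤ eL (h (S'.inf id)) :=
    finsetInf_le (g := fun a : K => eL (h a))
      (by simp [htop, heL.2.2.2.2.1])
      (fun a b => by simp only [hinf, heL.2.1]) S'
      (fun a ha => hS' ha)
  exact h2.trans (hmono (hle.trans hcT))


include heK heL hinf in
lemma canLift_eq (u : CK) :
    canLift eK eL h u
      = sSup {z : CL | ∃ x : CK, FilterElt eK x ∧ x ≤ u ∧ z = fσ eK eL h x} := by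
  apply le_antisymm
  · apply sSup_le
    rintro z ⟨x, y, hx, hy, hxu, huy, rfl⟩
    refine le_sSup_of_le ⟨x, hx, hxu, rfl⟩ ?_
    obtain ⟨S, hS⟩ := hx
    obtain ⟨T, hT⟩ := hy
    obtain ⟨a, c, hxa, hac, hcy⟩ := cpt heK (hS ▸ hT ▸ hxu.trans huy)
    have hxc : x ≤ eK c := (hS ▸ hxa).trans (mono_of_inf heK.2.1 hac)
    have hcy' : eK c ≤ y := hT ▸ hcy
    -- show sInf over the interval ≤ fσ x
    apply le_sInf
    rintro w ⟨-, ⟨a', ha', rfl⟩, rfl⟩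
    have hmem : a' ⊓ c ∈ {a : K | x ≤ eK a ∧ eK a ≤ y} := by
      constructor
      · rw [heK.2.1]; exact le_inf ha' hxc
      · exact (mono_of_inf heK.2.1 inf_le_right).trans hcy'
    calc sInf (eL '' (h '' {a : K | x ≤ eK a ∧ eK a ≤ y}))
        ≤ eL (h (a' ⊓ c)) := sInf_le ⟨_, ⟨_, hmem, rfl⟩, rfl⟩
      _ ≤ eL (h a') := by
          rw [hinf, heL.2.1]; exact inf_le_left
  · apply sSup_le
    rintro z ⟨x, hx, hxu, rfl⟩
    refine le_sSup ⟨x, ⊤, hx, ⟨{⊤}, by simp [heK.2.2.2.2.1]⟩, hxu, le_top, ?_⟩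
    show fσ eK eL h x = _
    unfold fσ
    congr 2
    ext a
    simp

include heK heL hinf in
lemma canLift_mono : Monotone (canLift eK eL h) := by
  intro u v huv
  rw [canLift_eq heK heL hinf, canLift_eq heK heL hinf]
  apply sSup_le_sSup
  rintro z ⟨x, hx, hxu, rfl⟩
  exact ⟨x, hx, hxu.trans huv, rfl⟩

include heK heL hinf htop in
lemma filter_le_y0 {p : CK} {q : CL} (hq : IdealElt eL q)
    (hfp : fσ eK eL h p ≤ q) :
    p ≤ sSup (eK '' {a : K | eL (h a) ≤ q}) := by
  obtain ⟨T, hT⟩ := hq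
  obtain ⟨B', T', hB', hT', hle⟩ :=
    heL.2.2.2.2.2.2.2 (h '' {a : K | p ≤ eK a}) T (hT ▸ hfp)
  obtain ⟨a₀, hpa, hha⟩ := exists_preimage_inf hinf htop heK.2.1 heK.2.2.2.2.1 B'
    (fun b hb => by
      obtain ⟨a, ha, rfl⟩ := hB' hb
      exact ⟨a, ha, rfl⟩)
  have h1 : eL (h a₀) ≤ q := by
    have h2 : eL (T'.sup id) ≤ sSup (eL '' T) :=
      finsetSup_le heL.2.2.2.1 heL.2.2.1 T' (fun a ha => le_sSup ⟨a, hT' ha, rfl⟩)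
    calc eL (h a₀) ≤ eL (T'.sup id) := mono_of_inf heL.2.1 (hha.trans hle)
      _ ≤ sSup (eL '' T) := h2
      _ = q := hT.symm
  exact hpa.trans (le_sSup ⟨a₀, h1, rfl⟩)

include heK heL hsup hbot in
lemma ideal_ge_x0 {p : CL} {q : CK} (hp : FilterElt eL p)
    (hle : p ≤ gπ eK eL h q) :
    sInf (eK '' {a : K | p ≤ eL (h a)}) ≤ q := by
  obtain ⟨P, hP⟩ := hp
  obtain ⟨P', B', hP', hB', hleb⟩ :=
    heL.2.2.2.2.2.2.2 P (h '' {a : K | eK a ≤ q}) (hP ▸ hle)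
  obtain ⟨b₀, hbq, hhb⟩ := exists_preimage_sup hsup hbot heK.2.2.1 heK.2.2.2.1 B'
    (fun b hb => by
      obtain ⟨a, ha, rfl⟩ := hB' hb
      exact ⟨a, ha, rfl⟩)
  have h1 : p ≤ eL (h b₀) := by
    have h2 : p ≤ eL (P'.inf id) := by
      rw [hP]
      exact finsetInf_le heL.2.2.2.2.1 heL.2.1 P' (fun a ha => sInf_le ⟨a, hP' ha, rfl⟩)
    calc p ≤ eL (P'.inf id) := h2
      _ ≤ eL (h b₀) := mono_of_inf heL.2.1 (hleb.trans hhb)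
  have h3 : eK b₀ ∈ eK '' {a : K | p ≤ eL (h a)} := ⟨b₀, h1, rfl⟩
  exact (sInf_le h3).trans hbq

include heK heL hinf in
lemma canLift_le_gπ {u y : CK} (hy : IdealElt eK y) (huy : u ≤ y) :
    canLift eK eL h u ≤ gπ eK eL h y := by
  rw [canLift_eq heK heL hinf]
  apply sSup_le
  rintro z ⟨x, hx, hxu, rfl⟩
  obtain ⟨S, hS⟩ := hx
  obtain ⟨T, hT⟩ := hy
  obtain ⟨a, c, hxa, hac, hcy⟩ := cpt heK (hS ▸ hT ▸ hxu.trans huy)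
  calc fσ eK eL h x ≤ eL (h a) := sInf_le ⟨_, ⟨a, hS ▸ hxa, rfl⟩, rfl⟩
    _ ≤ eL (h c) := mono_of_inf heL.2.1
        (mono_of_inf hinf hac)
    _ ≤ gπ eK eL h y := le_sSup ⟨_, ⟨c, hT ▸ hcy, rfl⟩, rfl⟩


include heK heL hinf hsup hbot htop in
lemma canLift_eq_inf (u : CK) :
    canLift eK eL h u
      = sInf {z : CL | ∃ y : CK, IdealElt eK y ∧ u ≤ y ∧ z = gπ eK eL h y} := by
  apply le_antisymm
  · apply le_sInf
    rintro z ⟨y, hy, huy, rfl⟩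
    exact canLift_le_gπ heK heL hinf hy huy
  · apply dense_ideal heL
    intro q hq hcq
    set y0 := sSup (eK '' {a : K | eL (h a) ≤ q}) with hy0def
    have hy0 : IdealElt eK y0 := ⟨_, rfl⟩
    have huy0 : u ≤ y0 := by
      apply dense_filter heK
      intro x hx hxu
      have hfx : fσ eK eL h x ≤ q := by
        refine le_trans ?_ hcq
        rw [canLift_eq heK heL hinf]
        exact le_sSup ⟨x, hx, hxu, rfl⟩
      exact filter_le_y0 heK heL hinf htop hq hfx
    refine le_trans (sInf_le ⟨y0, hy0, huy0, rfl⟩) ?_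
    apply sSup_le
    rintro w ⟨-, ⟨a, ha, rfl⟩, rfl⟩
    exact bridge_up heK heL hinf hsup hbot ha

include heK heL hinf hsup hbot htop in
lemma map_sSup (S : Set CK) :
    canLift eK eL h (sSup S) = sSup (canLift eK eL h '' S) := by
  apply le_antisymm
  · rw [canLift_eq heK heL hinf]
    apply sSup_le
    rintro z ⟨x, hx, hxS, rfl⟩
    apply dense_ideal heL
    intro q hq hRq
    set y0 := sSup (eK '' {a : K | eL (h a) ≤ q}) with hy0def
    have hSy0 : ∀ u ∈ S, u ≤ y0 := by
      intro u hu
      apply dense_filter heK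
      intro p hp hpu
      have hfp : fσ eK eL h p ≤ q := by
        have hm : canLift eK eL h u ∈ canLift eK eL h '' S := ⟨u, hu, rfl⟩
        refine le_trans ?_ ((le_sSup hm).trans hRq)
        rw [canLift_eq heK heL hinf]
        exact le_sSup ⟨p, hp, hpu, rfl⟩
      exact filter_le_y0 heK heL hinf htop hq hfp
    have hxy0 : x ≤ y0 := hxS.trans (sSup_le hSy0)
    obtain ⟨Sx, hSx⟩ := hx
    obtain ⟨a, c, hxa, hac, hcy⟩ := cpt heK (le_trans (le_of_eq hSx.symm) hxy0)
    have h1 : fσ eK eL h x ≤ eL (h a) := sInf_le ⟨_, ⟨a, hSx ▸ hxa, rfl⟩, rfl⟩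
    have h2 : eL (h a) ≤ eL (h c) := mono_of_inf heL.2.1 (mono_of_inf hinf hac)
    exact h1.trans (h2.trans (bridge_up heK heL hinf hsup hbot hcy))
  · apply sSup_le
    rintro z ⟨u, hu, rfl⟩
    exact canLift_mono heK heL hinf (le_sSup hu)

include heK heL hinf hsup hbot htop in
lemma map_sInf (S : Set CK) :
    canLift eK eL h (sInf S) = sInf (canLift eK eL h '' S) := by
  apply le_antisymm
  · apply le_sInf
    rintro z ⟨u, hu, rfl⟩
    exact canLift_mono heK heL hinf (sInf_le hu)
  · rw [canLift_eq_inf heK heL hinf hsup hbot htop]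
    apply le_sInf
    rintro z ⟨y, hy, hSy, rfl⟩
    apply dense_filter heL
    intro p hp hpR
    set x0 := sInf (eK '' {a : K | p ≤ eL (h a)}) with hx0def
    have hx0S : ∀ u ∈ S, x0 ≤ u := by
      intro u hu
      apply dense_ideal heK
      intro q' hq' huq'
      have hpc : p ≤ gπ eK eL h q' := by
        have hm : canLift eK eL h u ∈ canLift eK eL h '' S := ⟨u, hu, rfl⟩
        refine le_trans (hpR.trans (sInf_le hm)) ?_
        exact canLift_le_gπ heK heL hinf hq' huq'
      exact ideal_ge_x0 heK heL hsup hbot hp hpc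
    have hx0y : x0 ≤ y := (le_sInf hx0S).trans hSy
    obtain ⟨T, hT⟩ := hy
    obtain ⟨a, c, hxa, hac, hcy⟩ := cpt heK (le_trans hx0y (le_of_eq hT))
    have h1 : p ≤ eL (h a) := bridge_down heK heL hinf htop hxa
    have h2 : eL (h a) ≤ eL (h c) := mono_of_inf heL.2.1 (mono_of_inf hinf hac)
    exact h1.trans (h2.trans (le_sSup ⟨_, ⟨c, hT ▸ hcy, rfl⟩, rfl⟩))

end Main
end CanExtAux

/-- The canonical lifting of a bounded-lattice homomorphism is a complete
lattice homomorphism and is continuous for the interval topologies. -/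
theorem stmt_13 {K L CK CL : Type*}
    [Lattice K] [BoundedOrder K] [Lattice L] [BoundedOrder L]
    [CompleteLattice CK] [CompleteLattice CL]
    (eK : K → CK) (eL : L → CL)
    (heK : IsCanonExt eK) (heL : IsCanonExt eL)
    (h : K → L)
    (hinf : ∀ a b : K, h (a ⊓ b) = h a ⊓ h b)
    (hsup : ∀ a b : K, h (a ⊔ b) = h a ⊔ h b)
    (hbot : h ⊥ = ⊥) (htop : h ⊤ = ⊤) :
    (∀ S : Set CK, canLift eK eL h (sSup S) = sSup (canLift eK eL h '' S)) ∧
    (∀ S : Set CK, canLift eK eL h (sInf S) = sInf (canLift eK eL h '' S)) ∧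
    (let ιK : TopologicalSpace CK := TopologicalSpace.generateFrom
        {U : Set CK | ∃ a : CK, U = (Set.Ici a)ᶜ ∨ U = (Set.Iic a)ᶜ}
     let ιL : TopologicalSpace CL := TopologicalSpace.generateFrom
        {U : Set CL | ∃ a : CL, U = (Set.Ici a)ᶜ ∨ U = (Set.Iic a)ᶜ}
     @Continuous CK CL ιK ιL (canLift eK eL h)) := by
  have hsSup := CanExtAux.map_sSup heK heL hinf hsup hbot htop
  have hsInf := CanExtAux.map_sInf heK heL hinf hsup hbot htop
  have hmono := CanExtAux.canLift_mono heK heL hinf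
  refine ⟨hsSup, hsInf, ?_⟩
  intro ιK ιL
  show @Continuous CK CL
    (TopologicalSpace.generateFrom
      {U : Set CK | ∃ a : CK, U = (Set.Ici a)ᶜ ∨ U = (Set.Iic a)ᶜ})
    (TopologicalSpace.generateFrom
      {U : Set CL | ∃ a : CL, U = (Set.Ici a)ᶜ ∨ U = (Set.Iic a)ᶜ})
    (canLift eK eL h)
  refine continuous_generateFrom_iff.mpr ?_
  rintro s ⟨a, rfl | rfl⟩
  · have hpre : canLift eK eL h ⁻¹' (Set.Ici a)
        = Set.Ici (sInf {u : CK | a ≤ canLift eK eL h u}) := by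
      ext u
      simp only [Set.mem_preimage, Set.mem_Ici]
      constructor
      · intro hu
        exact sInf_le hu
      · intro hu
        have h1 : a ≤ canLift eK eL h (sInf {u : CK | a ≤ canLift eK eL h u}) := by
          rw [hsInf]
          apply le_sInf
          rintro w ⟨v, hv, rfl⟩
          exact hv
        exact h1.trans (hmono hu)
    rw [Set.preimage_compl, hpre]
    exact TopologicalSpace.isOpen_generateFrom_of_mem ⟨_, Or.inl rfl⟩
  · have hpre : canLift eK eL h ⁻¹' (Set.Iic a)
        = Set.Iic (sSup {u : CK | canLift eK eL h u ≤ a}) := by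
      ext u
      simp only [Set.mem_preimage, Set.mem_Iic]
      constructor
      · intro hu
        exact le_sSup hu
      · intro hu
        have h1 : canLift eK eL h (sSup {u : CK | canLift eK eL h u ≤ a}) ≤ a := by
          rw [hsSup]
          apply sSup_le
          rintro w ⟨v, hv, rfl⟩
          exact hv
        exact (hmono hu).trans h1
    rw [Set.preimage_compl, hpre]
    exact TopologicalSpace.isOpen_generateFrom_of_mem ⟨_, Or.inr rfl⟩
end

section
/- Let (L_x)_{x∈X} be a family of bounded lattices and L ≤ ∏_X L_x a Boolean product (a subdirect product over a Boolean space X with clopen equalisers and the patching property). Then the canonical extension of L is ∏_X L_x^δ, the product of the canonical extensions, via the coordinate-wise embedding. -/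
/-- Canonical extensions of Boolean products: if `L ≤ ∏_X L_x` is a Boolean
product of bounded lattices, then the coordinate-wise embedding of `L` into
the product `∏_X L_x^δ` of the canonical extensions is a canonical extension
of `L` (injective lattice embedding, dense, and compact). -/
theorem stmt_15 {X : Type*} [TopologicalSpace X] [CompactSpace X] [T2Space X]
    [TotallyDisconnectedSpace X]
    {Lx : X → Type*} [∀ x, Lattice (Lx x)] [∀ x, BoundedOrder (Lx x)]
    (S : Set (∀ x, Lx x))
    (hbot : (⊥ : ∀ x, Lx x) ∈ S) (htop : (⊤ : ∀ x, Lx x) ∈ S)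
    (hmeet : ∀ u ∈ S, ∀ v ∈ S, u ⊓ v ∈ S) (hjoin : ∀ u ∈ S, ∀ v ∈ S, u ⊔ v ∈ S)
    (hsubdirect : ∀ (x : X) (a : Lx x), ∃ u ∈ S, u x = a)
    (heq : ∀ u ∈ S, ∀ v ∈ S, IsClopen {x | u x = v x})
    (hpatch : ∀ u ∈ S, ∀ v ∈ S, ∀ N : Set X, IsClopen N →
      ∃ w ∈ S, (∀ x ∈ N, w x = u x) ∧ ∀ x ∉ N, w x = v x)
    {Cx : X → Type*} [∀ x, CompleteLattice (Cx x)]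
    (e : ∀ x, Lx x → Cx x) (he : ∀ x, IsCanonExt (e x)) :
    let f : ↥S → ∀ x, Cx x := fun u x => e x (u.1 x)
    Function.Injective f ∧
    (∀ c : ∀ x, Cx x, ∃ 𝒮 : Set (Set ↥S), c = ⨆ T ∈ 𝒮, sInf (f '' T)) ∧
    (∀ c : ∀ x, Cx x, ∃ 𝒮 : Set (Set ↥S), c = ⨅ T ∈ 𝒮, sSup (f '' T)) ∧
    (∀ A B : Set ↥S, sInf (f '' A) ≤ sSup (f '' B) →
      ∃ F G : Finset ↥S, ↑F ⊆ A ∧ ↑G ⊆ B ∧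
        ∀ x : X, F.inf (fun u => u.1 x) ≤ G.sup (fun u => u.1 x)) := by
  classical
  intro f
  -- pointwise formulas
  have hinf : ∀ (T : Set ↥S) (x : X), sInf (f '' T) x = ⨅ w ∈ T, e x (w.1 x) := by
    intro T x
    rw [sInf_image]
    simp only [iInf_apply]
    rfl
  have hsup : ∀ (T : Set ↥S) (x : X), sSup (f '' T) x = ⨆ w ∈ T, e x (w.1 x) := by
    intro T x
    rw [sSup_image]
    simp only [iSup_apply]
    rfl
  refine ⟨?_, ?_, ?_, ?_⟩
  · -- injectivity
    intro u v huv
    ext x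
    exact (he x).1 (congrFun huv x)
  · -- density: joins of meets
    intro c
    refine ⟨{T | sInf (f '' T) ≤ c}, le_antisymm ?_ (iSup₂_le fun T hT => hT)⟩
    intro x
    simp only [iSup_apply]
    obtain ⟨𝒮x, hc⟩ := (he x).2.2.2.2.2.1 (c x)
    refine le_trans (le_of_eq hc) (iSup₂_le fun S0 hS0 => ?_)
    have hq : sInf (e x '' S0) ≤ c x := by
      rw [hc]; exact le_iSup₂ (f := fun S0 _ => sInf (e x '' S0)) S0 hS0
    set T : Set ↥S := {w : ↥S | w.1 x ∈ insert ⊤ S0 ∧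
      ∃ N : Set X, IsClopen N ∧ x ∈ N ∧ ∀ y ∉ N, w.1 y = ⊥} with hT
    have hTmem : sInf (f '' T) ≤ c := by
      intro y
      by_cases hyx : y = x
      · subst hyx
        rw [hinf]
        refine le_trans (le_sInf ?_) hq
        rintro b ⟨a, haS0, rfl⟩
        obtain ⟨u, huS, hux⟩ := hsubdirect y a
        have hwT : (⟨u, huS⟩ : ↥S) ∈ T := by
          refine ⟨?_, Set.univ, isClopen_univ, Set.mem_univ y,
            fun z hz => absurd (Set.mem_univ z) hz⟩
          show u y ∈ insert ⊤ S0
          rw [hux]; exact Set.mem_insert_of_mem _ haS0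
        have h1 : (⨅ w ∈ T, e y (w.1 y)) ≤ e y (u y) := iInf₂_le (⟨u, huS⟩ : ↥S) hwT
        rwa [hux] at h1
      · obtain ⟨N, hN, hxN, hyN⟩ := exists_isClopen_of_totally_separated (Ne.symm hyx)
        obtain ⟨w, hwS, hwN, hwNc⟩ := hpatch ⊤ htop ⊥ hbot N hN
        have hwT : (⟨w, hwS⟩ : ↥S) ∈ T := by
          refine ⟨?_, N, hN, hxN, fun z hz => hwNc z hz⟩
          show w x ∈ insert ⊤ S0
          rw [hwN x hxN, Pi.top_apply]; exact Set.mem_insert _ _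
        rw [hinf]
        calc (⨅ w ∈ T, e y (w.1 y)) ≤ e y (w y) := iInf₂_le (⟨w, hwS⟩ : ↥S) hwT
        _ = ⊥ := by rw [hwNc y hyN, Pi.bot_apply]; exact (he y).2.2.2.1
        _ ≤ c y := bot_le
    have hTval : sInf (e x '' S0) ≤ sInf (f '' T) x := by
      rw [hinf]
      refine le_iInf₂ fun w hw => ?_
      rcases hw.1 with h | h
      · rw [h, (he x).2.2.2.2.1]; exact le_top
      · exact sInf_le ⟨w.1 x, h, rfl⟩
    exact le_trans hTval
      (le_iSup₂ (f := fun T (_ : sInf (f '' T) ≤ c) => sInf (f '' T) x) T hTmem)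
  · -- density: meets of joins
    intro c
    refine ⟨{T | c ≤ sSup (f '' T)}, le_antisymm (le_iInf₂ fun T hT => hT) ?_⟩
    intro x
    simp only [iInf_apply]
    obtain ⟨𝒮x, hc⟩ := (he x).2.2.2.2.2.2.1 (c x)
    refine le_trans (le_iInf₂ fun S0 hS0 => ?_) (le_of_eq hc.symm)
    have hq : c x ≤ sSup (e x '' S0) := by
      rw [hc]; exact iInf₂_le (f := fun S0 _ => sSup (e x '' S0)) S0 hS0
    set T : Set ↥S := {w : ↥S | w.1 x ∈ insert ⊥ S0 ∧
      ∃ N : Set X, IsClopen N ∧ x ∈ N ∧ ∀ y ∉ N, w.1 y = ⊤} with hT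
    have hTmem : c ≤ sSup (f '' T) := by
      intro y
      by_cases hyx : y = x
      · subst hyx
        rw [hsup]
        refine le_trans hq (sSup_le ?_)
        rintro b ⟨a, haS0, rfl⟩
        obtain ⟨u, huS, hux⟩ := hsubdirect y a
        have hwT : (⟨u, huS⟩ : ↥S) ∈ T := by
          refine ⟨?_, Set.univ, isClopen_univ, Set.mem_univ y,
            fun z hz => absurd (Set.mem_univ z) hz⟩
          show u y ∈ insert ⊥ S0
          rw [hux]; exact Set.mem_insert_of_mem _ haS0
        have h1 : e y (u y) ≤ ⨆ w ∈ T, e y (w.1 y) := le_iSup₂ (f := fun w (_ : w ∈ T) => e y (w.1 y)) (⟨u, huS⟩ : ↥S) hwT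
        rwa [hux] at h1
      · obtain ⟨N, hN, hxN, hyN⟩ := exists_isClopen_of_totally_separated (Ne.symm hyx)
        obtain ⟨w, hwS, hwN, hwNc⟩ := hpatch ⊥ hbot ⊤ htop N hN
        have hwT : (⟨w, hwS⟩ : ↥S) ∈ T := by
          refine ⟨?_, N, hN, hxN, fun z hz => hwNc z hz⟩
          show w x ∈ insert ⊥ S0
          rw [hwN x hxN, Pi.bot_apply]; exact Set.mem_insert _ _
        rw [hsup]
        calc c y ≤ ⊤ := le_top
        _ = e y (w y) := by rw [hwNc y hyN, Pi.top_apply]; exact ((he y).2.2.2.2.1).symm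
        _ ≤ ⨆ w ∈ T, e y (w.1 y) := le_iSup₂ (f := fun w (_ : w ∈ T) => e y (w.1 y)) (⟨w, hwS⟩ : ↥S) hwT
    have hTval : sSup (f '' T) x ≤ sSup (e x '' S0) := by
      rw [hsup]
      refine iSup₂_le fun w hw => ?_
      rcases hw.1 with h | h
      · rw [h, (he x).2.2.2.1]; exact bot_le
      · exact le_sSup ⟨w.1 x, h, rfl⟩
    exact le_trans
      (iInf₂_le (f := fun T (_ : c ≤ sSup (f '' T)) => sSup (f '' T) x) T hTmem) hTval
  · -- compactness
    intro A B hAB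
    have hFinfS : ∀ F : Finset ↥S, (F.inf fun u => u.1) ∈ S := by
      intro F
      induction F using Finset.induction with
      | empty => simpa using htop
      | insert _ _ _ ih => rw [Finset.inf_insert]; exact hmeet _ (Subtype.prop _) _ ih
    have hGsupS : ∀ G : Finset ↥S, (G.sup fun u => u.1) ∈ S := by
      intro G
      induction G using Finset.induction with
      | empty => simpa using hbot
      | insert _ _ _ ih => rw [Finset.sup_insert]; exact hjoin _ (Subtype.prop _) _ ih
    have key : ∀ x : X, ∃ F G : Finset ↥S, ↑F ⊆ A ∧ ↑G ⊆ B ∧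
        F.inf (fun u => u.1 x) ≤ G.sup (fun u => u.1 x) := by
      intro x
      have h1 : sInf (e x '' ((fun w : ↥S => w.1 x) '' A)) ≤
          sSup (e x '' ((fun w : ↥S => w.1 x) '' B)) := by
        rw [Set.image_image, Set.image_image]
        have hA := hinf A x
        have hB := hsup B x
        rw [sInf_image, sSup_image]
        calc (⨅ w ∈ A, e x (w.1 x)) = sInf (f '' A) x := (hinf A x).symm
        _ ≤ sSup (f '' B) x := hAB x
        _ = ⨆ w ∈ B, e x (w.1 x) := hsup B x
      obtain ⟨S', T', hS', hT', hST⟩ := (he x).2.2.2.2.2.2.2 _ _ h1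
      -- pull back S' into A, T' into B
      have hgA : ∀ a ∈ S', ∃ u : ↥S, u ∈ A ∧ u.1 x = a := by
        intro a ha
        obtain ⟨u, huA, hux⟩ := hS' ha
        exact ⟨u, huA, hux⟩
      have hgB : ∀ a ∈ T', ∃ u : ↥S, u ∈ B ∧ u.1 x = a := by
        intro a ha
        obtain ⟨u, huB, hux⟩ := hT' ha
        exact ⟨u, huB, hux⟩
      choose gA hgA1 hgA2 using hgA
      choose gB hgB1 hgB2 using hgB
      refine ⟨S'.attach.image (fun a => gA a.1 a.2), T'.attach.image (fun a => gB a.1 a.2),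
        ?_, ?_, ?_⟩
      · intro u hu
        simp only [Finset.coe_image, Set.mem_image, Finset.mem_coe, Finset.mem_attach,
          true_and, Subtype.exists] at hu
        obtain ⟨a, ha, rfl⟩ := hu
        exact hgA1 a ha
      · intro u hu
        simp only [Finset.coe_image, Set.mem_image, Finset.mem_coe, Finset.mem_attach,
          true_and, Subtype.exists] at hu
        obtain ⟨a, ha, rfl⟩ := hu
        exact hgB1 a ha
      · calc (S'.attach.image (fun a => gA a.1 a.2)).inf (fun u => u.1 x)
            ≤ S'.inf id := by
              refine Finset.le_inf fun a ha => ?_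
              have : gA a ha ∈ S'.attach.image (fun a => gA a.1 a.2) :=
                Finset.mem_image.2 ⟨⟨a, ha⟩, Finset.mem_attach _ _, rfl⟩
              calc _ ≤ (gA a ha).1 x := Finset.inf_le this
              _ = a := hgA2 a ha
        _ ≤ T'.sup id := hST
        _ ≤ (T'.attach.image (fun a => gB a.1 a.2)).sup (fun u => u.1 x) := by
              refine Finset.sup_le fun a ha => ?_
              have : gB a ha ∈ T'.attach.image (fun a => gB a.1 a.2) :=
                Finset.mem_image.2 ⟨⟨a, ha⟩, Finset.mem_attach _ _, rfl⟩
              calc (id a : Lx x) = (gB a ha).1 x := (hgB2 a ha).symm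
              _ ≤ _ := Finset.le_sup (f := fun u : ↥S => u.1 x) this
    choose Fx Gx hFxA hGxB hFGx using key
    -- clopen neighborhoods where the inequality holds
    set N : X → Set X := fun x =>
      {y | ((Fx x).inf (fun u => u.1) ⊓ (Gx x).sup (fun u => u.1)) y
        = (Fx x).inf (fun u => u.1) y} with hN
    have hNclopen : ∀ x, IsClopen (N x) :=
      fun x => heq _ (hmeet _ (hFinfS (Fx x)) _ (hGsupS (Gx x))) _ (hFinfS (Fx x))
    have hNself : ∀ x, x ∈ N x := by
      intro x
      show ((Fx x).inf (fun u => u.1) ⊓ (Gx x).sup (fun u => u.1)) x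
        = (Fx x).inf (fun u => u.1) x
      rw [Pi.inf_apply, inf_eq_left, Finset.inf_apply, Finset.sup_apply]
      exact hFGx x
    have hNle : ∀ x, ∀ y ∈ N x, (Fx x).inf (fun u => u.1 y) ≤ (Gx x).sup (fun u => u.1 y) := by
      intro x y hy
      have : ((Fx x).inf (fun u => u.1) ⊓ (Gx x).sup (fun u => u.1)) y
          = (Fx x).inf (fun u => u.1) y := hy
      rw [Pi.inf_apply, inf_eq_left, Finset.inf_apply, Finset.sup_apply] at this
      exact this
    obtain ⟨t, ht⟩ := IsCompact.elim_finite_subcover isCompact_univ N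
      (fun x => (hNclopen x).2) (fun x _ => Set.mem_iUnion.2 ⟨x, hNself x⟩)
    refine ⟨t.biUnion Fx, t.biUnion Gx, ?_, ?_, ?_⟩
    · intro u hu
      obtain ⟨x, _, hx⟩ := Finset.mem_biUnion.1 hu
      exact hFxA x hx
    · intro u hu
      obtain ⟨x, _, hx⟩ := Finset.mem_biUnion.1 hu
      exact hGxB x hx
    · intro y
      obtain ⟨x, hxt, hyN⟩ := Set.mem_iUnion₂.1 (ht (Set.mem_univ y))
      calc (t.biUnion Fx).inf (fun u => u.1 y) ≤ (Fx x).inf (fun u => u.1 y) :=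
            Finset.inf_mono (fun u hu => Finset.mem_biUnion.2 ⟨x, hxt, hu⟩)
      _ ≤ (Gx x).sup (fun u => u.1 y) := hNle x y hyN
      _ ≤ (t.biUnion Gx).sup (fun u => u.1 y) :=
            Finset.sup_mono (fun u hu => Finset.mem_biUnion.2 ⟨x, hxt, hu⟩)
end

section
/- Let C be a perfect lattice (completely join-irreducibles are join-dense and completely meet-irreducibles are meet-dense) such that for every completely join-irreducible p, the complement of ↑p is the downset of a finite set of completely meet-irreducibles, and dually. Then C is algebraic: every element of the finite-join closure of J^∞(C) is compact, and every element of C is a directed join of such elements. -/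
/-- `p` is completely join-irreducible: whenever `p` is the supremum of a set,
`p` belongs to that set. -/
def CompJoinIrred {C : Type*} [CompleteLattice C] (p : C) : Prop :=
  ∀ S : Set C, p = sSup S → p ∈ S

/-- `m` is completely meet-irreducible: whenever `m` is the infimum of a set,
`m` belongs to that set. -/
def CompMeetIrred {C : Type*} [CompleteLattice C] (m : C) : Prop :=
  ∀ S : Set C, m = sInf S → m ∈ S

/-- Each completely join-irreducible element is compact, under (★). -/
lemma compJoinIrred_isCompact {C : Type*} [CompleteLattice C]
    (hstar : ∀ p : C, CompJoinIrred p → ∃ M : Finset C,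
      (∀ m ∈ M, CompMeetIrred m) ∧ ∀ c : C, ¬ p ≤ c ↔ ∃ m ∈ M, c ≤ m)
    (p : C) (hp : CompJoinIrred p) : IsCompactElement p := by
  rw [CompleteLattice.isCompactElement_iff_le_of_directed_sSup_le]
  intro D hne hdir hle
  by_contra hcon
  push_neg at hcon
  obtain ⟨M, -, hM⟩ := hstar p hp
  -- each d ∈ D lies below some m ∈ M
  -- claim: some m ∈ M bounds all of D
  have key : ∃ m ∈ M, ∀ d ∈ D, d ≤ m := by
    by_contra hk
    push_neg at hk
    haveI : Nonempty D := hne.to_subtype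
    have hdir' : Directed (· ≤ ·) (Subtype.val : D → C) := hdir.directed_val
    have hw : ∀ m : C, ∃ d : D, m ∈ M → ¬ (d : C) ≤ m := by
      intro m
      by_cases hm : m ∈ M
      · obtain ⟨d, hd, hdm⟩ := hk m hm
        exact ⟨⟨d, hd⟩, fun _ => hdm⟩
      · exact ⟨Classical.arbitrary D, fun h => absurd h hm⟩
    classical
    choose f hf using hw
    obtain ⟨z, hz⟩ := hdir'.finset_le (M.image f)
    have hzD : (z : C) ∈ D := z.2
    obtain ⟨m, hm, hzm⟩ := (hM (z : C)).mp (hcon _ hzD)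
    have hfz : (f m : C) ≤ (z : C) := hz (f m) (Finset.mem_image_of_mem f hm)
    exact hf m hm (hfz.trans hzm)
  obtain ⟨m, hm, hbd⟩ := key
  have : sSup D ≤ m := sSup_le hbd
  have : ¬ p ≤ sSup D := (hM _).mpr ⟨m, hm, this⟩
  exact this hle

/-- A perfect lattice satisfying (★) and (★)^∂ is (doubly) algebraic: every
finite join of completely join-irreducibles is a compact element, and every
element is a directed join of such elements. -/
theorem stmt_16 {C : Type*} [CompleteLattice C]
    (hjdense : ∀ c : C, c = sSup {p : C | CompJoinIrred p ∧ p ≤ c})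
    (hmdense : ∀ c : C, c = sInf {m : C | CompMeetIrred m ∧ c ≤ m})
    (hstar : ∀ p : C, CompJoinIrred p → ∃ M : Finset C,
      (∀ m ∈ M, CompMeetIrred m) ∧ ∀ c : C, ¬ p ≤ c ↔ ∃ m ∈ M, c ≤ m)
    (hstard : ∀ m : C, CompMeetIrred m → ∃ J : Finset C,
      (∀ p ∈ J, CompJoinIrred p) ∧ ∀ c : C, ¬ c ≤ m ↔ ∃ p ∈ J, p ≤ c) :
    (∀ k : C, (∃ F : Finset C, (∀ p ∈ F, CompJoinIrred p) ∧ k = F.sup id) →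
      ∀ s : Set C, k ≤ sSup s → ∃ t : Finset C, ↑t ⊆ s ∧ k ≤ t.sup id) ∧
    (∀ c : C, ∃ D : Set C,
      (∀ k ∈ D, ∃ F : Finset C, (∀ p ∈ F, CompJoinIrred p) ∧ k = F.sup id) ∧
      DirectedOn (· ≤ ·) D ∧ c = sSup D) := by
  classical
  have hcpt : ∀ k : C, (∃ F : Finset C, (∀ p ∈ F, CompJoinIrred p) ∧ k = F.sup id) →
      IsCompactElement k := by
    rintro k ⟨F, hF, rfl⟩
    exact CompleteLattice.isCompactElement_finsetSup F
      (fun p hp => compJoinIrred_isCompact hstar p (hF p hp))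
  refine ⟨fun k hk => (CompleteLattice.isCompactElement_iff_exists_le_sSup_of_le_sSup (α := C) k).mp (hcpt k hk), fun c => ?_⟩
  refine ⟨{k | ∃ F : Finset C, (∀ p ∈ F, CompJoinIrred p ∧ p ≤ c) ∧ k = F.sup id},
    ?_, ?_, ?_⟩
  · rintro k ⟨F, hF, rfl⟩
    exact ⟨F, fun p hp => (hF p hp).1, rfl⟩
  · rintro x ⟨F1, hF1, rfl⟩ y ⟨F2, hF2, rfl⟩
    refine ⟨(F1 ∪ F2).sup id, ⟨F1 ∪ F2, ?_, rfl⟩, ?_, ?_⟩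
    · intro p hp
      rcases Finset.mem_union.mp hp with h | h
      exacts [hF1 p h, hF2 p h]
    · exact Finset.sup_mono Finset.subset_union_left
    · exact Finset.sup_mono Finset.subset_union_right
  · apply le_antisymm
    · conv_lhs => rw [hjdense c]
      apply sSup_le
      rintro p ⟨hp, hpc⟩
      refine le_sSup_of_le ⟨{p}, ?_, rfl⟩ (by simp)
      intro q hq
      rw [Finset.mem_singleton] at hq
      subst hq
      exact ⟨hp, hpc⟩
    · apply sSup_le
      rintro k ⟨F, hF, rfl⟩
      exact Finset.sup_le (fun p hp => (hF p hp).2)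
end

section
/- Let C be a perfect lattice satisfying conditions (★) and (★)^∂. Then the Scott topology on C coincides with the upper (weak) topology generated by complements of principal downsets of elements of M^∞(C), and dually. -/
open TopologicalSpace in
lemma scott_eq_upper {C : Type*} [CompleteLattice C]
    (hjdense : ∀ c : C, c = sSup {p : C | CompJoinIrred p ∧ p ≤ c})
    (hstar : ∀ p : C, CompJoinIrred p → ∃ M : Finset C,
      (∀ m ∈ M, CompMeetIrred m) ∧ ∀ c : C, ¬ p ≤ c ↔ ∃ m ∈ M, c ≤ m)
    (U : Set C) :
    (IsUpperSet U ∧ ∀ D : Set C, D.Nonempty → DirectedOn (· ≤ ·) D →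
        sSup D ∈ U → (D ∩ U).Nonempty) ↔
    (TopologicalSpace.generateFrom
        {V : Set C | ∃ m : C, CompMeetIrred m ∧ V = (Set.Iic m)ᶜ}).IsOpen U := by
  classical
  letI t := TopologicalSpace.generateFrom
      {V : Set C | ∃ m : C, CompMeetIrred m ∧ V = (Set.Iic m)ᶜ}
  constructor
  · rintro ⟨hup, hscott⟩
    -- `Ici p` is open for completely join-irreducible `p`
    have hIci : ∀ p : C, CompJoinIrred p → t.IsOpen (Set.Ici p) := by
      intro p hp
      obtain ⟨M, hM, hiff⟩ := hstar p hp
      have hrw : Set.Ici p = ⋂ m ∈ M, (Set.Iic m)ᶜ := by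
        ext c
        simp only [Set.mem_Ici, Set.mem_iInter, Set.mem_compl_iff, Set.mem_Iic]
        constructor
        · intro hpc m hm hcm
          exact absurd ((hiff c).2 ⟨m, hm, hcm⟩) (not_not.2 hpc)
        · intro h
          by_contra hpc
          obtain ⟨m, hm, hcm⟩ := (hiff c).1 hpc
          exact h m hm hcm
      rw [hrw]
      exact isOpen_biInter_finset fun m hm =>
        TopologicalSpace.isOpen_generateFrom_of_mem ⟨m, hM m hm, rfl⟩
    -- each point of U has an open neighborhood inside U
    have key : ∀ x ∈ U, ∃ V : Set C, t.IsOpen V ∧ x ∈ V ∧ V ⊆ U := by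
      intro x hx
      set J : Set C := {p : C | CompJoinIrred p ∧ p ≤ x} with hJ
      set D : Set C := (fun F : Finset C => sSup (F : Set C)) '' {F : Finset C | ↑F ⊆ J}
        with hD
      have hne : D.Nonempty := ⟨sSup ((∅ : Finset C) : Set C), ⟨∅, by simp⟩⟩
      have hdir : DirectedOn (· ≤ ·) D := by
        rintro _ ⟨F1, hF1, rfl⟩ _ ⟨F2, hF2, rfl⟩
        refine ⟨sSup ((F1 ∪ F2 : Finset C) : Set C), ⟨F1 ∪ F2, ?_, rfl⟩, ?_, ?_⟩
        · intro a ha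
          rcases Finset.mem_union.1 ha with h | h
          exacts [hF1 h, hF2 h]
        · exact sSup_le_sSup (by intro a ha; exact Finset.mem_union_left _ ha)
        · exact sSup_le_sSup (by intro a ha; exact Finset.mem_union_right _ ha)
      have hsup : sSup D = x := by
        apply le_antisymm
        · apply sSup_le
          rintro _ ⟨F, hF, rfl⟩
          exact sSup_le fun p hp => (hF hp).2
        · calc x = sSup J := hjdense x
            _ ≤ sSup D := by
              apply sSup_le
              intro p hp
              have : p ∈ D := ⟨{p}, by simpa using hp, by simp⟩
              exact le_sSup this
      obtain ⟨d, hdD, hdU⟩ := hscott D hne hdir (hsup ▸ hx)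
      obtain ⟨F, hF, rfl⟩ := hdD
      refine ⟨⋂ p ∈ F, Set.Ici p, ?_, ?_, ?_⟩
      · exact isOpen_biInter_finset fun p hp => hIci p (hF hp).1
      · exact Set.mem_iInter₂.2 fun p hp => (hF hp).2
      · intro c hc
        have : sSup (F : Set C) ≤ c := sSup_le fun p hp => Set.mem_iInter₂.1 hc p hp
        exact hup this hdU
    have : U = ⋃₀ {V : Set C | t.IsOpen V ∧ V ⊆ U} := by
      ext x
      constructor
      · intro hx
        obtain ⟨V, h1, h2, h3⟩ := key x hx
        exact ⟨V, ⟨h1, h3⟩, h2⟩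
      · rintro ⟨V, ⟨_, hVU⟩, hxV⟩
        exact hVU hxV
    rw [this]
    exact isOpen_sUnion fun V hV => hV.1
  · intro hopen
    induction hopen with
    | basic V hV =>
      obtain ⟨m, _, rfl⟩ := hV
      refine ⟨(isLowerSet_Iic m).compl, ?_⟩
      intro D hne hdir hD
      by_contra h
      rw [Set.not_nonempty_iff_eq_empty] at h
      apply hD
      simp only [Set.mem_compl_iff, Set.mem_Iic, not_not]
      apply sSup_le
      intro d hd
      by_contra hdm
      have : d ∈ D ∩ (Set.Iic m)ᶜ := ⟨hd, hdm⟩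
      simp [h] at this
    | univ =>
      exact ⟨isUpperSet_univ, fun D hne _ _ => ⟨hne.choose, hne.choose_spec, trivial⟩⟩
    | inter s u _ _ ihs ihu =>
      refine ⟨ihs.1.inter ihu.1, ?_⟩
      intro D hne hdir hD
      obtain ⟨d1, hd1D, hd1⟩ := ihs.2 D hne hdir hD.1
      obtain ⟨d2, hd2D, hd2⟩ := ihu.2 D hne hdir hD.2
      obtain ⟨d3, hd3D, h13, h23⟩ := hdir d1 hd1D d2 hd2D
      exact ⟨d3, hd3D, ihs.1 h13 hd1, ihu.1 h23 hd2⟩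
    | sUnion S _ ih =>
      refine ⟨isUpperSet_sUnion fun s hs => (ih s hs).1, ?_⟩
      intro D hne hdir hD
      obtain ⟨s, hsS, hDs⟩ := hD
      obtain ⟨d, hdD, hds⟩ := (ih s hsS).2 D hne hdir hDs
      exact ⟨d, hdD, s, hsS, hds⟩

/-- In a perfect lattice satisfying (★) and (★)^∂, the Scott topology equals
the upper topology generated by the complements of principal downsets of
completely meet-irreducibles; dually for the dual Scott and lower topologies. -/
theorem stmt_17 {C : Type*} [CompleteLattice C]
    (hjdense : ∀ c : C, c = sSup {p : C | CompJoinIrred p ∧ p ≤ c})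
    (hmdense : ∀ c : C, c = sInf {m : C | CompMeetIrred m ∧ c ≤ m})
    (hstar : ∀ p : C, CompJoinIrred p → ∃ M : Finset C,
      (∀ m ∈ M, CompMeetIrred m) ∧ ∀ c : C, ¬ p ≤ c ↔ ∃ m ∈ M, c ≤ m)
    (hstard : ∀ m : C, CompMeetIrred m → ∃ J : Finset C,
      (∀ p ∈ J, CompJoinIrred p) ∧ ∀ c : C, ¬ c ≤ m ↔ ∃ p ∈ J, p ≤ c) :
    (∀ U : Set C,
      (IsUpperSet U ∧ ∀ D : Set C, D.Nonempty → DirectedOn (· ≤ ·) D →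
          sSup D ∈ U → (D ∩ U).Nonempty) ↔
      (TopologicalSpace.generateFrom
          {V : Set C | ∃ m : C, CompMeetIrred m ∧ V = (Set.Iic m)ᶜ}).IsOpen U) ∧
    (∀ U : Set C,
      (IsLowerSet U ∧ ∀ D : Set C, D.Nonempty → DirectedOn (· ≥ ·) D →
          sInf D ∈ U → (D ∩ U).Nonempty) ↔
      (TopologicalSpace.generateFrom
          {V : Set C | ∃ p : C, CompJoinIrred p ∧ V = (Set.Ici p)ᶜ}).IsOpen U) := by
  constructor
  · exact scott_eq_upper hjdense hstar
  · exact scott_eq_upper (C := Cᵒᵈ) hmdense hstard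
end

section
/- Let h : D → E be a surjective complete lattice homomorphism between complete lattices. If D satisfies condition (★) — for every completely join-irreducible p, the complement of ↑p is the downset of a finite set of completely meet-irreducibles — then E satisfies (★) as well. -/
/-- Condition (★) is preserved by surjective complete lattice homomorphisms. -/
theorem stmt_19 {D E : Type*} [CompleteLattice D] [CompleteLattice E]
    (h : D → E) (hsurj : Function.Surjective h)
    (hsSup : ∀ S : Set D, h (sSup S) = sSup (h '' S))
    (hsInf : ∀ S : Set D, h (sInf S) = sInf (h '' S))
    (hstar : ∀ p : D, CompJoinIrred p → ∃ M : Finset D,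
      (∀ m ∈ M, CompMeetIrred m) ∧ ∀ c : D, ¬ p ≤ c ↔ ∃ m ∈ M, c ≤ m) :
    ∀ q : E, CompJoinIrred q → ∃ M : Finset E,
      (∀ m ∈ M, CompMeetIrred m) ∧ ∀ c : E, ¬ q ≤ c ↔ ∃ m ∈ M, c ≤ m := by
  classical
  intro q hq
  -- the lower adjoint of h
  set f : E → D := fun e => sInf {d | e ≤ h d} with hf
  have hmono : Monotone h := by
    intro a b hab
    have h1 := hsSup {a, b}
    have hab' : sSup ({a, b} : Set D) = b := by
      simpa [sSup_pair] using sup_eq_right.mpr hab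
    rw [hab'] at h1
    rw [h1]
    exact le_sSup ⟨a, by simp, rfl⟩
  have hlefe : ∀ e : E, e ≤ h (f e) := by
    intro e
    rw [hf]
    simp only
    rw [hsInf]
    apply le_sInf
    rintro x ⟨d', hd', rfl⟩
    exact hd'
  have hadj : ∀ (e : E) (d : D), f e ≤ d ↔ e ≤ h d := by
    intro e d
    constructor
    · intro hle
      exact (hlefe e).trans (hmono hle)
    · intro hle
      exact sInf_le hle
  have hhf : ∀ e : E, h (f e) = e := by
    intro e
    obtain ⟨d, rfl⟩ := hsurj e
    exact le_antisymm (hmono ((hadj _ _).mpr le_rfl)) (hlefe _)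
  have hiff : ∀ e : E, q ≤ e ↔ f q ≤ f e := by
    intro e
    constructor
    · intro hle
      exact (hadj q (f e)).mpr (by rw [hhf]; exact hle)
    · intro hle
      have h2 := hmono hle
      rwa [hhf, hhf] at h2
  have hp : CompJoinIrred (f q) := by
    intro S hS
    have hq' : q = sSup (h '' S) := by rw [← hsSup, ← hS, hhf]
    obtain ⟨s, hs, hsq⟩ := hq _ hq'
    have h1 : f q ≤ s := (hadj q s).mpr hsq.ge
    have h2 : s ≤ f q := hS ▸ le_sSup hs
    rwa [le_antisymm h1 h2]
  obtain ⟨M, hM1, hM2⟩ := hstar (f q) hp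
  set M' : Finset E := M.image h with hM'def
  have key : ∀ c : E, ¬ q ≤ c ↔ ∃ m ∈ M', c ≤ m := by
    intro c
    rw [hiff c, hM2 (f c)]
    constructor
    · rintro ⟨m, hm, hle⟩
      exact ⟨h m, Finset.mem_image_of_mem h hm, (hadj c m).mp hle⟩
    · rintro ⟨m', hm', hle⟩
      obtain ⟨m, hm, rfl⟩ := Finset.mem_image.mp hm'
      exact ⟨m, hm, (hadj c m).mpr hle⟩
  -- take the maximal elements of M'
  set M'' : Finset E := M'.filter (fun x => ∀ y ∈ M', x ≤ y → y ≤ x) with hM''def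
  have hsub : ∀ m ∈ M'', m ∈ M' := fun m hm => Finset.mem_of_mem_filter _ hm
  have hmax : ∀ m ∈ M', ∃ m'' ∈ M'', m ≤ m'' := by
    intro m hm
    have hfin : ({y ∈ (M' : Set E) | m ≤ y}).Finite :=
      (M'.finite_toSet).subset (fun x hx => hx.1)
    obtain ⟨a, ha, hamax⟩ := hfin.exists_maximalFor id _ ⟨m, hm, le_rfl⟩
    refine ⟨a, ?_, ha.2⟩
    rw [hM''def, Finset.mem_filter]
    refine ⟨ha.1, fun y hy hay => ?_⟩
    have := hamax (j := y) ⟨hy, ha.2.trans hay⟩ hay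
    simp only [id] at this
    exact this.ge
  refine ⟨M'', ?_, ?_⟩
  · -- every maximal element is completely meet-irreducible
    intro m hm
    have hmM' : m ∈ M' := hsub m hm
    have hmmax : ∀ y ∈ M', m ≤ y → y ≤ m := (Finset.mem_filter.mp hm).2
    have hnq : ¬ q ≤ m := (key m).mpr ⟨m, hmM', le_rfl⟩
    intro S hS
    by_contra hmS
    apply hnq
    rw [hS]
    apply le_sInf
    intro s hs
    by_contra hqs
    obtain ⟨m', hm', hsm'⟩ := (key s).mp hqs
    have hms : m ≤ s := hS ▸ sInf_le hs
    have hmm' : m ≤ m' := hms.trans hsm'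
    have hm'm : m' ≤ m := hmmax m' hm' hmm'
    have : s = m := le_antisymm (hsm'.trans hm'm) hms
    exact hmS (this ▸ hs)
  · -- the equivalence
    intro c
    constructor
    · intro hc
      obtain ⟨m, hm, hcm⟩ := (key c).mp hc
      obtain ⟨m'', hm'', hmm''⟩ := hmax m hm
      exact ⟨m'', hm'', hcm.trans hmm''⟩
    · rintro ⟨m, hm, hcm⟩
      intro hqc
      exact (key m).mpr ⟨m, hsub m hm, le_rfl⟩ (hqc.trans hcm)
end
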